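/- arXiv:1101.0517 — 18 statements merged into one kernel-verified Lean document; each statement's English description precedes it below -/
import Mathlib

section
/- Let n ≥ 1, let d : Fin n → Fin n → ℝ be symmetric with d i i = 0 for all i, and let w : Fin n → ℝ. Define p : Fin n → Fin n → ℝ by p i j = (d i j + w i + w j)/2. Then p is a weak partial semimetric on Fin n if and only if d is a semimetric on Fin n and w i ≥ 0 for all i. (In other words, the linear bijection P(d;w) = p carries the cone of weighted semimetrics WMET_n onto the cone of weak partial semimetrics wPMET_n.) -/
def IsSemimetric {n : ℕ} (d : Fin n → Fin n → ℝ) : Prop :=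
  (∀ i j, d i j = d j i) ∧ (∀ i, d i i = 0) ∧ (∀ i j, 0 ≤ d i j) ∧
    (∀ i j k, d i j ≤ d i k + d k j)

def IsWeakPartialSemimetric {n : ℕ} (f : Fin n → Fin n → ℝ) : Prop :=
  (∀ i j, f i j = f j i) ∧ (∀ i, 0 ≤ f i i) ∧
    (∀ i j k, 0 ≤ f i k + f k j - f i j - f k k)

/-- `P` carries weighted semimetrics onto weak partial semimetrics. -/
theorem stmt_0 (n : ℕ) (hn : 1 ≤ n) (d : Fin n → Fin n → ℝ) (w : Fin n → ℝ)
    (hsym : ∀ i j, d i j = d j i) (hdiag : ∀ i, d i i = 0)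
    (p : Fin n → Fin n → ℝ) (hp : ∀ i j, p i j = (d i j + w i + w j) / 2) :
    IsWeakPartialSemimetric p ↔ IsSemimetric d ∧ ∀ i, 0 ≤ w i := by
  constructor
  · rintro ⟨-, hdg, htri⟩
    have hw : ∀ i, 0 ≤ w i := by
      intro i
      have := hdg i
      rw [hp, hdiag] at this
      linarith
    have ht : ∀ i j k, d i j ≤ d i k + d k j := by
      intro i j k
      have := htri i j k
      rw [hp, hp, hp, hp, hdiag] at this
      linarith
    have hnn : ∀ i j, 0 ≤ d i j := by
      intro i j
      have := ht i i j
      rw [hdiag, hsym j i] at this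
      linarith
    exact ⟨⟨hsym, hdiag, hnn, ht⟩, hw⟩
  · rintro ⟨⟨-, -, -, ht⟩, hw⟩
    refine ⟨fun i j => by rw [hp, hp, hsym i j]; ring, fun i => by rw [hp, hdiag]; linarith [hw i], fun i j k => ?_⟩
    rw [hp, hp, hp, hp, hdiag]
    have := ht i j k
    linarith
end

section
/- Let n ≥ 1, let d : Fin n → Fin n → ℝ be symmetric with d i i = 0 for all i, and let w : Fin n → ℝ. Define p i j = (d i j + w i + w j)/2. Then p is a partial semimetric on Fin n if and only if d is a semimetric, w i ≥ 0 for all i, and d i j ≥ w i − w j for all i, j. (That is, P maps the cone dWMET_n of down-weighted semimetrics onto the cone PMET_n of partial semimetrics.) -/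
def IsPartialSemimetric {n : ℕ} (f : Fin n → Fin n → ℝ) : Prop :=
  IsWeakPartialSemimetric f ∧ ∀ i j, f i i ≤ f i j

/-- `P` maps down-weighted semimetrics onto partial semimetrics. -/
theorem stmt_1 (n : ℕ) (hn : 1 ≤ n) (d : Fin n → Fin n → ℝ) (w : Fin n → ℝ)
    (hsym : ∀ i j, d i j = d j i) (hdiag : ∀ i, d i i = 0)
    (p : Fin n → Fin n → ℝ) (hp : ∀ i j, p i j = (d i j + w i + w j) / 2) :
    IsPartialSemimetric p ↔
      IsSemimetric d ∧ (∀ i, 0 ≤ w i) ∧ ∀ i j, w i - w j ≤ d i j := by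
  constructor
  · rintro ⟨⟨_, hdiag', htri⟩, hle⟩
    have hw : ∀ i, 0 ≤ w i := by
      intro i
      have := hdiag' i
      rw [hp i i, hdiag i] at this
      linarith
    have hdw : ∀ i j, w i - w j ≤ d i j := by
      intro i j
      have := hle i j
      rw [hp i i, hp i j, hdiag i] at this
      linarith
    refine ⟨⟨hsym, hdiag, ?_, ?_⟩, hw, hdw⟩
    · intro i j
      have h1 := hdw i j
      have h2 := hdw j i
      rw [hsym j i] at h2
      linarith [abs_nonneg (w i - w j), abs_le.mp (le_refl |w i - w j|)]
    · intro i j k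
      have := htri i j k
      rw [hp i k, hp k j, hp i j, hp k k, hdiag k] at this
      linarith
  · rintro ⟨⟨_, _, hdnn, htri⟩, hw, hdw⟩
    refine ⟨⟨?_, ?_, ?_⟩, ?_⟩
    · intro i j; rw [hp i j, hp j i, hsym i j]; ring
    · intro i; rw [hp i i, hdiag i]; linarith [hw i]
    · intro i j k
      have := htri i j k
      rw [hp i k, hp k j, hp i j, hp k k, hdiag k]
      linarith
    · intro i j
      have := hdw i j
      rw [hp i i, hp i j, hdiag i]
      linarith
end

section
/- Let n ≥ 1, let d : Fin n → Fin n → ℝ be symmetric with d i i = 0 for all i, and let w : Fin n → ℝ. Define p i j = (d i j + w i + w j)/2. Then p is a strong partial semimetric on Fin n if and only if d is a semimetric and w i − w j ≤ d i j ≤ w i + w j for all i, j (nonnegativity of w is then automatic). (That is, P maps the cone sWMET_n of strongly weighted semimetrics onto the cone sPMET_n of strong partial semimetrics.) -/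
def IsStrongPartialSemimetric {n : ℕ} (f : Fin n → Fin n → ℝ) : Prop :=
  IsPartialSemimetric f ∧ ∀ i j, f i j ≤ f i i + f j j

/-- `P` maps strongly weighted semimetrics onto strong partial semimetrics. -/
theorem stmt_2 (n : ℕ) (hn : 1 ≤ n) (d : Fin n → Fin n → ℝ) (w : Fin n → ℝ)
    (hsym : ∀ i j, d i j = d j i) (hdiag : ∀ i, d i i = 0)
    (p : Fin n → Fin n → ℝ) (hp : ∀ i j, p i j = (d i j + w i + w j) / 2) :
    IsStrongPartialSemimetric p ↔
      IsSemimetric d ∧ ∀ i j, w i - w j ≤ d i j ∧ d i j ≤ w i + w j := by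
  constructor
  · rintro ⟨⟨⟨psym, pdiag, ptri⟩, plow⟩, pup⟩
    have hlow : ∀ i j, w i - w j ≤ d i j := fun i j => by
      have := plow i j; rw [hp i i, hp i j, hdiag i] at this; linarith
    have hup : ∀ i j, d i j ≤ w i + w j := fun i j => by
      have := pup i j; rw [hp i j, hp i i, hp j j, hdiag i, hdiag j] at this; linarith
    refine ⟨⟨hsym, hdiag, fun i j => ?_, fun i j k => ?_⟩, fun i j => ⟨hlow i j, hup i j⟩⟩
    · have h1 := hlow i j
      have h2 := hlow j i
      rw [hsym j i] at h2; linarith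
    · have := ptri i j k
      rw [hp i k, hp k j, hp i j, hp k k, hdiag k] at this; linarith
  · rintro ⟨⟨_, _, hnn, htri⟩, hw⟩
    have hwnn : ∀ i, 0 ≤ w i := fun i => by
      have := (hw i i).2; have := hnn i i; have := hdiag i; linarith
    refine ⟨⟨⟨fun i j => ?_, fun i => ?_, fun i j k => ?_⟩, fun i j => ?_⟩, fun i j => ?_⟩
    · rw [hp i j, hp j i, hsym i j]; ring
    · rw [hp i i, hdiag i]; have := hwnn i; linarith
    · rw [hp i k, hp k j, hp i j, hp k k, hdiag k]
      have := htri i j k; linarith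
    · rw [hp i i, hp i j, hdiag i]; have := (hw i j).1; linarith
    · rw [hp i j, hp i i, hp j j, hdiag i, hdiag j]; have := (hw i j).2; linarith
end

section
/- Let n ≥ 1, let d : Fin n → Fin n → ℝ be symmetric with d i i = 0 for all i, and let w : Fin n → ℝ. Define q : Fin n → Fin n → ℝ by q i j = (d i j − w i + w j)/2 (so q i j + w i = q j i + w j automatically). Then q is a quasi-semimetric on Fin n and w i ≥ 0 for all i, if and only if d is a semimetric, w i ≥ 0 for all i, and d i j ≥ w i − w j for all i, j. (That is, Q maps the cone dWMET_n of down-weighted semimetrics onto the cone WQMET_n of weightable quasi-semimetrics with nonnegative weight.) -/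
def IsQuasiSemimetric {n : ℕ} (q : Fin n → Fin n → ℝ) : Prop :=
  (∀ i j, 0 ≤ q i j) ∧ (∀ i, q i i = 0) ∧ (∀ i j k, q i j ≤ q i k + q k j)

/-- `Q` maps down-weighted semimetrics onto weightable
quasi-semimetrics with nonnegative weight. -/
theorem stmt_3 (n : ℕ) (hn : 1 ≤ n) (d : Fin n → Fin n → ℝ) (w : Fin n → ℝ)
    (hsym : ∀ i j, d i j = d j i) (hdiag : ∀ i, d i i = 0)
    (q : Fin n → Fin n → ℝ) (hq : ∀ i j, q i j = (d i j - w i + w j) / 2) :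
    (IsQuasiSemimetric q ∧ ∀ i, 0 ≤ w i) ↔
      IsSemimetric d ∧ (∀ i, 0 ≤ w i) ∧ ∀ i j, w i - w j ≤ d i j := by
  constructor
  · rintro ⟨⟨hpos, hdiagq, htri⟩, hw⟩
    refine ⟨⟨hsym, hdiag, ?_, ?_⟩, hw, ?_⟩
    · intro i j
      have h1 := hpos i j
      have h2 := hpos j i
      rw [hq] at h1 h2
      rw [hsym j i] at h2
      linarith
    · intro i j k
      have h := htri i j k
      rw [hq, hq, hq] at h
      linarith
    · intro i j
      have h := hpos i j
      rw [hq] at h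
      linarith
  · rintro ⟨⟨_, _, hnn, htri⟩, hw, hdw⟩
    refine ⟨⟨?_, ?_, ?_⟩, hw⟩
    · intro i j
      have := hdw i j
      rw [hq]
      linarith
    · intro i
      rw [hq, hdiag]
      ring
    · intro i j k
      have h := htri i j k
      rw [hq, hq, hq]
      linarith
end

section
/- Let n ≥ 1 and let p be a weak partial semimetric on Fin n. Define d' : Fin n → Fin n → ℝ by d' i j = p i j − (p i i + p j j)/2. Then d' is a semimetric on Fin n: it is symmetric, has zero diagonal, is nonnegative, and satisfies the triangle inequality. (Consequently every weak partial semimetric is the sum of a semimetric and a nonnegative combination of the functions P(e_t), t ∈ Fin n.) -/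
/-- subtracting the diagonal part of a weak partial semimetric
yields a semimetric. -/
theorem stmt_4 (n : ℕ) (hn : 1 ≤ n) (p : Fin n → Fin n → ℝ)
    (hp : IsWeakPartialSemimetric p)
    (d' : Fin n → Fin n → ℝ) (hd' : ∀ i j, d' i j = p i j - (p i i + p j j) / 2) :
    IsSemimetric d' := by
  obtain ⟨hsym, hdiag, htri⟩ := hp
  refine ⟨fun i j => ?_, fun i => ?_, fun i j => ?_, fun i j k => ?_⟩
  · rw [hd' i j, hd' j i, hsym i j]; ring
  · rw [hd' i i]; ring
  · have h := htri i i j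
    rw [hsym j i] at h
    rw [hd' i j]; linarith
  · have h := htri i j k
    rw [hd' i j, hd' i k, hd' k j]; linarith
end

section
/- Let n ≥ 1 and j ∈ Fin n. Let e : Fin n → Fin n → ℝ be defined by e j j = 2, e i j = e j i = 1 for i ≠ j, and e i k = 0 when i ≠ j and k ≠ j. Then e is a weak partial semimetric on Fin n, and it spans an extreme ray of the cone of weak partial semimetrics: whenever p₁ and p₂ are weak partial semimetrics on Fin n with p₁ + p₂ = e, there exists λ ∈ ℝ with 0 ≤ λ ≤ 1 such that p₁ = λ • e (and hence p₂ = (1−λ) • e). -/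
/-- `2 P(e_j)` is a weak partial semimetric spanning an extreme ray of
the cone of weak partial semimetrics. -/
theorem stmt_5 (n : ℕ) (hn : 1 ≤ n) (j : Fin n) (e : Fin n → Fin n → ℝ)
    (hejj : e j j = 2)
    (he1 : ∀ i, i ≠ j → e i j = 1 ∧ e j i = 1)
    (he0 : ∀ i k, i ≠ j → k ≠ j → e i k = 0) :
    IsWeakPartialSemimetric e ∧
      ∀ p₁ p₂ : Fin n → Fin n → ℝ,
        IsWeakPartialSemimetric p₁ → IsWeakPartialSemimetric p₂ →
        p₁ + p₂ = e →
        ∃ l : ℝ, 0 ≤ l ∧ l ≤ 1 ∧ p₁ = l • e := by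
  have he : ∀ x y, e x y = (if x = j then (1:ℝ) else 0) + (if y = j then (1:ℝ) else 0) := by
    intro x y
    rcases eq_or_ne x j with hx | hx <;> rcases eq_or_ne y j with hy | hy
    · rw [hx, hy]; simp [hejj]; norm_num
    · subst hx; simp [hy, (he1 y hy).2]
    · subst hy; simp [hx, (he1 x hx).1]
    · simp [hx, hy, he0 x y hx hy]
  constructor
  · refine ⟨?_, ?_, ?_⟩
    · intro x y; rw [he, he]; ring
    · intro x; rw [he]; split_ifs <;> norm_num
    · intro i m k; rw [he, he, he, he]; split_ifs <;> norm_num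
  · intro p₁ p₂ h₁ h₂ hsum
    obtain ⟨s₁, d₁, t₁⟩ := h₁
    obtain ⟨s₂, d₂, t₂⟩ := h₂
    have hsum' : ∀ x y, p₁ x y + p₂ x y = e x y := by
      intro x y; have := congrFun (congrFun hsum x) y; simpa using this
    have nn : ∀ (p : Fin n → Fin n → ℝ), (∀ i j, p i j = p j i) → (∀ i, 0 ≤ p i i) →
        (∀ i j k, 0 ≤ p i k + p k j - p i j - p k k) → ∀ x y, 0 ≤ p x y := by
      intro p s d t x y
      have h := t x x y
      have hs := s x y
      linarith [d x, d y]
    have n1 := nn p₁ s₁ d₁ t₁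
    have n2 := nn p₂ s₂ d₂ t₂
    have hjj := hsum' j j
    rw [hejj] at hjj
    refine ⟨p₁ j j / 2, by linarith [d₁ j], by linarith [d₂ j], ?_⟩
    have key : ∀ i, i ≠ j → p₁ i j = p₁ j j / 2 := by
      intro i hi
      have t1' := t₁ i i j
      have t2' := t₂ i i j
      have hij := hsum' i j
      rw [(he1 i hi).1] at hij
      have hii := hsum' i i
      rw [he0 i i hi hi] at hii
      have hs1 := s₁ i j
      have hs2 := s₂ i j
      have e1 : p₁ i i = 0 := le_antisymm (by linarith [n2 i i]) (d₁ i)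
      have e2 : p₂ i i = 0 := by linarith
      linarith
    funext x y
    simp only [Pi.smul_apply, smul_eq_mul]
    rcases eq_or_ne x j with hx | hx <;> rcases eq_or_ne y j with hy | hy
    · subst hx; subst hy; rw [hejj]; ring
    · rw [hx, (he1 y hy).2, s₁ j y, key y hy]; ring
    · rw [hy, (he1 x hx).1, key x hx]; ring
    · rw [he0 x y hx hy, mul_zero]
      have h0 := hsum' x y
      rw [he0 x y hx hy] at h0
      linarith [n1 x y, n2 x y]
end

section
/- Let n ≥ 1 and let p be a partial semimetric on Fin n. Define its lifting p⁺ : Fin (n+1) → Fin (n+1) → ℝ by p⁺ 0 0 = 0, p⁺ 0 (i+1) = p⁺ (i+1) 0 = p i i for i ∈ Fin n, and p⁺ (i+1) (j+1) = p i j for i, j ∈ Fin n. Then p⁺ is a partial semimetric on Fin (n+1) if and only if p i j ≤ p i i + p j j holds for all i, j, i.e., if and only if p is a strong partial semimetric. (Thus sPMET_n = { p ∈ PMET_n : p⁺ ∈ PMET_{n+1} }.) -/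
/-- the lifting `p⁺` of a partial semimetric `p` is a partial
semimetric iff `p` is a strong partial semimetric. -/
theorem stmt_8 (n : ℕ) (hn : 1 ≤ n) (p : Fin n → Fin n → ℝ)
    (hp : IsPartialSemimetric p)
    (P : Fin (n + 1) → Fin (n + 1) → ℝ)
    (hP00 : P 0 0 = 0)
    (hP0 : ∀ i : Fin n, P 0 i.succ = p i i ∧ P i.succ 0 = p i i)
    (hPs : ∀ i j : Fin n, P i.succ j.succ = p i j) :
    IsPartialSemimetric P ↔ ∀ i j, p i j ≤ p i i + p j j := by
  obtain ⟨⟨psymm, pdiag, ptri⟩, pmin⟩ := hp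
  constructor
  · rintro ⟨⟨_, _, Ptri⟩, _⟩ i j
    have h := Ptri i.succ j.succ 0
    rw [hP00, (hP0 i).2, (hP0 j).1, hPs] at h
    linarith
  · intro hstrong
    refine ⟨⟨?_, ?_, ?_⟩, ?_⟩
    · intro i j
      induction i using Fin.cases with
      | zero =>
        induction j using Fin.cases with
        | zero => rfl
        | succ b => rw [(hP0 b).1, (hP0 b).2]
      | succ a =>
        induction j using Fin.cases with
        | zero => rw [(hP0 a).1, (hP0 a).2]
        | succ b => rw [hPs, hPs, psymm]
    · intro i
      induction i using Fin.cases with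
      | zero => rw [hP00]
      | succ a => rw [hPs]; exact pdiag a
    · intro i j k
      induction i using Fin.cases with
      | zero =>
        induction j using Fin.cases with
        | zero =>
          induction k using Fin.cases with
          | zero => rw [hP00]; linarith
          | succ c =>
            rw [hP00, (hP0 c).1, (hP0 c).2, hPs]
            have := pdiag c; linarith
        | succ b =>
          induction k using Fin.cases with
          | zero => rw [hP00]; linarith
          | succ c =>
            rw [(hP0 c).1, (hP0 b).1, hPs, hPs]
            have h1 := pmin b c
            have h2 := psymm b c
            linarith
      | succ a =>
        induction j using Fin.cases with
        | zero =>
          induction k using Fin.cases with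
          | zero => rw [hP00]; linarith
          | succ c =>
            rw [(hP0 a).2, (hP0 c).2, hPs, hPs]
            have h1 := pmin a c
            linarith
        | succ b =>
          induction k using Fin.cases with
          | zero =>
            rw [hP00, (hP0 a).2, (hP0 b).1, hPs]
            have := hstrong a b; linarith
          | succ c =>
            rw [hPs, hPs, hPs, hPs]
            exact ptri a b c
    · intro i j
      induction i using Fin.cases with
      | zero =>
        induction j using Fin.cases with
        | zero => rw [hP00]
        | succ b => rw [hP00, (hP0 b).1]; exact pdiag b
      | succ a =>
        induction j using Fin.cases with
        | zero => rw [(hP0 a).2, hPs]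
        | succ b => rw [hPs, hPs]; exact pmin a b
end

section
/- Let n ≥ 1, let d : Fin n → Fin n → ℝ be symmetric with d i i = 0 for all i, and let w : Fin n → ℝ. Define D : Fin (n+1) → Fin (n+1) → ℝ by D 0 0 = 0, D 0 (i+1) = D (i+1) 0 = w i for i ∈ Fin n, and D (i+1) (j+1) = d i j for i, j ∈ Fin n. Then D is a semimetric on Fin (n+1) if and only if d is a semimetric on Fin n and w i − w j ≤ d i j ≤ w i + w j holds for all i, j (nonnegativity of w is then automatic). (Thus the cone sWMET_n of strongly weighted semimetrics on n points is identified with the metric cone MET_{n+1}.) -/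
/-- the one-point extension of `(d; w)` is a semimetric on `n+1`
points iff `d` is a semimetric and `(d; w)` is strongly weighted;
i.e. `sWMET_n = MET_{n+1}`. -/
theorem stmt_9 (n : ℕ) (hn : 1 ≤ n) (d : Fin n → Fin n → ℝ) (w : Fin n → ℝ)
    (hsym : ∀ i j, d i j = d j i) (hdiag : ∀ i, d i i = 0)
    (D : Fin (n + 1) → Fin (n + 1) → ℝ)
    (hD00 : D 0 0 = 0)
    (hD0 : ∀ i : Fin n, D 0 i.succ = w i ∧ D i.succ 0 = w i)
    (hDs : ∀ i j : Fin n, D i.succ j.succ = d i j) :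
    IsSemimetric D ↔
      IsSemimetric d ∧ ∀ i j, w i - w j ≤ d i j ∧ d i j ≤ w i + w j := by
  constructor
  · rintro ⟨Dsym, Ddiag, Dnn, Dtri⟩
    refine ⟨⟨hsym, hdiag, ?_, ?_⟩, ?_⟩
    · intro i j
      have := Dnn i.succ j.succ
      rwa [hDs] at this
    · intro i j k
      have := Dtri i.succ j.succ k.succ
      rwa [hDs, hDs, hDs] at this
    · intro i j
      constructor
      · have := Dtri 0 i.succ j.succ
        rw [(hD0 i).1, (hD0 j).1, hDs, hsym j i] at this
        linarith
      · have := Dtri i.succ j.succ 0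
        rw [(hD0 i).2, (hD0 j).1, hDs] at this
        linarith
  · rintro ⟨⟨_, _, dnn, dtri⟩, hw⟩
    have wnn : ∀ i, 0 ≤ w i := by
      intro i
      have := (hw i i).2
      rw [hdiag] at this; linarith
    refine ⟨?_, ?_, ?_, ?_⟩
    · intro i j
      induction i using Fin.cases <;> induction j using Fin.cases
      · rfl
      · rw [(hD0 _).1, (hD0 _).2]
      · rw [(hD0 _).1, (hD0 _).2]
      · rw [hDs, hDs]; apply hsym
    · intro i
      induction i using Fin.cases
      · exact hD00
      · rw [hDs]; apply hdiag
    · intro i j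
      induction i using Fin.cases <;> induction j using Fin.cases
      · exact hD00.ge
      · rw [(hD0 _).1]; apply wnn
      · rw [(hD0 _).2]; apply wnn
      · rw [hDs]; apply dnn
    · intro i j k
      induction i using Fin.cases <;> induction j using Fin.cases <;>
        induction k using Fin.cases
      · rw [hD00]; linarith
      · rename_i k
        rw [hD00, (hD0 k).1, (hD0 k).2]; have := wnn k; linarith
      · rename_i j
        rw [(hD0 j).1, hD00]; linarith
      · rename_i j k
        rw [(hD0 j).1, (hD0 k).1, hDs]
        have := (hw j k).1; have h2 := hsym k j; linarith
      · rename_i i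
        rw [(hD0 i).2, hD00]; linarith
      · rename_i i k
        rw [(hD0 i).2, hDs, (hD0 k).2]
        have := (hw i k).1; linarith
      · rename_i i j
        rw [hDs, (hD0 i).2, (hD0 j).1]
        exact (hw i j).2
      · rename_i i j k
        rw [hDs, hDs, hDs]; apply dtri
end

section
/- Let n ≥ 1 and let p : Fin n → Fin n → ℝ be a symmetric function with p i j ∈ {0, 1} for all i, j. Then p is a strong partial semimetric on Fin n if and only if there exists a subset S ⊆ Fin n such that for all i, j: p i j = 1 ↔ (i ∈ S ∨ j ∈ S). (Thus the 0,1-valued strong partial semimetrics are exactly the all-zero function and the 2ⁿ − 1 partial 2-cuts γ(S; S̄) = J(S) + δ(S) for nonempty S.) -/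
/-- the 0,1-valued strong partial semimetrics are exactly the
partial 2-cuts `γ(S; S̄) = J(S) + δ(S)` (with `S = ∅` giving the zero function). -/
theorem stmt_10 (n : ℕ) (hn : 1 ≤ n) (p : Fin n → Fin n → ℝ)
    (hsym : ∀ i j, p i j = p j i)
    (h01 : ∀ i j, p i j = 0 ∨ p i j = 1) :
    IsStrongPartialSemimetric p ↔
      ∃ S : Set (Fin n), ∀ i j, p i j = 1 ↔ (i ∈ S ∨ j ∈ S) := by
  constructor
  · rintro ⟨⟨⟨_, hnn, htri⟩, hmin⟩, hmax⟩
    refine ⟨{i | p i i = 1}, fun i j => ?_⟩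
    constructor
    · intro hij
      by_contra h
      push_neg at h
      obtain ⟨hi, hj⟩ := h
      have hii : p i i = 0 := (h01 i i).resolve_right hi
      have hjj : p j j = 0 := (h01 j j).resolve_right hj
      have := hmax i j
      rw [hii, hjj, hij] at this
      linarith
    · rintro (hi | hj)
      · have := hmin i j
        rw [Set.mem_setOf_eq] at hi
        rcases h01 i j with h | h
        · rw [hi, h] at this; linarith
        · exact h
      · have := hmin j i
        rw [Set.mem_setOf_eq] at hj
        rcases h01 i j with h | h
        · rw [hj, ← hsym i j, h] at this; linarith
        · exact h
  · rintro ⟨S, hS⟩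
    have h0 : ∀ i j, ¬(i ∈ S ∨ j ∈ S) → p i j = 0 := by
      intro i j h
      rcases h01 i j with h' | h'
      · exact h'
      · exact absurd ((hS i j).mp h') h
    have h1 : ∀ i j, (i ∈ S ∨ j ∈ S) → p i j = 1 := fun i j h => (hS i j).mpr h
    refine ⟨⟨⟨hsym, ?_, ?_⟩, ?_⟩, ?_⟩
    · intro i; rcases h01 i i with h | h <;> rw [h] <;> norm_num
    · intro i j k
      by_cases hk : k ∈ S
      · rw [h1 i k (Or.inr hk), h1 k j (Or.inl hk), h1 k k (Or.inl hk)]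
        rcases h01 i j with h | h <;> rw [h] <;> norm_num
      · rw [h0 k k (by tauto)]
        by_cases hi : i ∈ S
        · rw [h1 i k (Or.inl hi), h1 i j (Or.inl hi)]
          rcases h01 k j with h | h <;> rw [h] <;> norm_num
        · by_cases hj : j ∈ S
          · rw [h1 k j (Or.inr hj), h1 i j (Or.inr hj)]
            rcases h01 i k with h | h <;> rw [h] <;> norm_num
          · rw [h0 i j (by tauto), h0 i k (by tauto), h0 k j (by tauto)]
            norm_num
    · intro i j
      by_cases hi : i ∈ S
      · rw [h1 i i (Or.inl hi), h1 i j (Or.inl hi)]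
      · rw [h0 i i (by tauto)]
        rcases h01 i j with h | h <;> rw [h] <;> norm_num
    · intro i j
      by_cases hi : i ∈ S
      · rw [h1 i i (Or.inl hi)]
        have := (h01 j j).imp (le_of_eq ∘ Eq.symm) (le_of_eq ∘ Eq.symm)
        rcases h01 i j with h | h <;> rcases h01 j j with h' | h' <;>
          rw [h, h'] <;> norm_num
      · by_cases hj : j ∈ S
        · rw [h1 j j (Or.inl hj)]
          rcases h01 i j with h | h <;> rcases h01 i i with h' | h' <;>
            rw [h, h'] <;> norm_num
        · rw [h0 i j (by tauto), h0 i i (by tauto), h0 j j (by tauto)]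
          norm_num
end

section
/- Let n ≥ 1, let d : Fin n → Fin n → ℝ be symmetric with d i i = 0 and d i j ∈ {0, 1} for all i, j, and let w : Fin n → ℝ with w i ∈ {0, 1} for all i. Then [d is a semimetric and d i j ≥ w i − w j for all i, j] if and only if [the relation { (i,j) : d i j = 0 } is transitive and d i j = 0 implies w i = w j for all i, j]. (Thus the 0,1-valued down-weighted semimetrics are exactly the pairs (δ(𝒮); w) where δ(𝒮) is a multicut semimetric and the weight w is 0,1-valued and constant on each part of the partition 𝒮.) -/
/-- the 0,1-valued down-weighted semimetrics are exactly the
multicuts equipped with a 0,1-weight constant on each part. -/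
theorem stmt_11 (n : ℕ) (hn : 1 ≤ n) (d : Fin n → Fin n → ℝ) (w : Fin n → ℝ)
    (hsym : ∀ i j, d i j = d j i) (hdiag : ∀ i, d i i = 0)
    (hd01 : ∀ i j, d i j = 0 ∨ d i j = 1)
    (hw01 : ∀ i, w i = 0 ∨ w i = 1) :
    (IsSemimetric d ∧ ∀ i j, w i - w j ≤ d i j) ↔
      (Transitive (fun i j => d i j = 0) ∧ ∀ i j, d i j = 0 → w i = w j) := by
  constructor
  · rintro ⟨⟨_, _, hnn, htri⟩, hdw⟩
    constructor
    · intro i j k hij hjk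
      have h1 := htri i k j
      have h2 := hnn i k
      linarith
    · intro i j h0
      have h1 := hdw i j
      have h2 := hdw j i
      rw [hsym j i] at h2
      linarith
  · rintro ⟨htr, hwc⟩
    have hnn : ∀ i j, 0 ≤ d i j := by
      intro i j; rcases hd01 i j with h | h <;> linarith
    refine ⟨⟨hsym, hdiag, hnn, ?_⟩, ?_⟩
    · intro i j k
      rcases hd01 i k with h1 | h1
      · rcases hd01 k j with h2 | h2
        · have := htr h1 h2
          linarith
        · rcases hd01 i j with h3 | h3 <;> linarith
      · rcases hd01 i j with h3 | h3 <;> [skip; skip] <;> have := hnn k j <;> linarith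
    · intro i j
      rcases hd01 i j with h | h
      · rw [hwc i j h]; linarith [hnn i j, h]
      · rcases hw01 i with h1 | h1 <;> rcases hw01 j with h2 | h2 <;> linarith
end

section
/- Let n ≥ 1 and let q : Fin n → Fin n → ℝ be a function with q i j ∈ {0, 1} for all i, j. Then q is a quasi-semimetric that is weightable with some nonnegative weight w if and only if there exist an equivalence relation ∼ on Fin n and a subset A ⊆ Fin n that is a union of ∼-classes (i.e., i ∼ j implies (i ∈ A ↔ j ∈ A)) such that for all i, j: q i j = 1 ↔ (¬(i ∼ j) ∧ ¬(i ∈ A ∧ j ∉ A)). (Thus the 0,1-valued weightable quasi-semimetrics are exactly the functions δ(𝒮) − δ'(Â), where 𝒮 is a partition, Â a union of its parts, and δ'(Â) the oriented cut of Â.) -/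
/-- the 0,1-valued weightable quasi-semimetrics are exactly the
functions `δ(𝒮) − δ'(Â)` for a partition `𝒮` and a union `Â` of its parts. -/
theorem stmt_12 (n : ℕ) (hn : 1 ≤ n) (q : Fin n → Fin n → ℝ)
    (h01 : ∀ i j, q i j = 0 ∨ q i j = 1) :
    (IsQuasiSemimetric q ∧
        ∃ w : Fin n → ℝ, (∀ i, 0 ≤ w i) ∧ ∀ i j, q i j + w i = q j i + w j) ↔
      ∃ (r : Fin n → Fin n → Prop) (A : Set (Fin n)),
        Equivalence r ∧ (∀ i j, r i j → (i ∈ A ↔ j ∈ A)) ∧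
        ∀ i j, q i j = 1 ↔ (¬ r i j ∧ ¬(i ∈ A ∧ j ∉ A)) := by
  constructor
  · rintro ⟨⟨hnn, hzero, htri⟩, w, hw0, hwt⟩
    refine ⟨fun i j => q i j = 0 ∧ q j i = 0, {i | ∃ j, q i j = 0 ∧ q j i = 1}, ?_, ?_, ?_⟩
    · refine ⟨fun i => ⟨hzero i, hzero i⟩, fun h => ⟨h.2, h.1⟩, ?_⟩
      rintro i j k ⟨h1, h2⟩ ⟨h3, h4⟩
      constructor
      · have := htri i k j; have := hnn i k; linarith
      · have := htri k i j; have := hnn k i; linarith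
    · rintro i j ⟨h1, h2⟩
      have hwij : w i = w j := by have := hwt i j; linarith
      constructor
      · rintro ⟨k, hk1, hk2⟩
        refine ⟨k, ?_, ?_⟩
        · have := htri j k i; have := hnn j k; linarith
        · have h5 : q j k = 0 := by have := htri j k i; have := hnn j k; linarith
          have := hwt i k; have := hwt j k; linarith
      · rintro ⟨k, hk1, hk2⟩
        refine ⟨k, ?_, ?_⟩
        · have := htri i k j; have := hnn i k; linarith
        · have h5 : q i k = 0 := by have := htri i k j; have := hnn i k; linarith
          have := hwt j k; have := hwt i k; linarith
    · intro i j
      constructor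
      · intro h1
        refine ⟨fun hc => by rw [hc.1] at h1; norm_num at h1, ?_⟩
        rintro ⟨⟨k, hk1, hk2⟩, hjA⟩
        apply hjA
        rcases h01 j i with hji | hji
        · exact ⟨i, hji, h1⟩
        · -- w i = w j, w i = w k + 1
          have e1 := hwt i j
          have e2 := hwt i k
          have e3 := hwt j k
          refine ⟨k, ?_, ?_⟩
          · rcases h01 j k with h | h; · exact h
            rcases h01 k j with h' | h' <;> rw [h, h'] at e3 <;> linarith
          · rcases h01 k j with h' | h'; swap; · exact h'
            rcases h01 j k with h | h <;> rw [h, h'] at e3 <;> linarith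
      · rintro ⟨hr, hA⟩
        rcases h01 i j with hij | hij; swap; · exact hij
        exfalso
        have hji : q j i = 1 := by
          rcases h01 j i with h | h; · exact absurd ⟨hij, h⟩ hr
          exact h
        have hiA : i ∈ {i | ∃ j, q i j = 0 ∧ q j i = 1} := ⟨j, hij, hji⟩
        have hjA : j ∈ {i | ∃ j, q i j = 0 ∧ q j i = 1} := by
          by_contra hc; exact hA ⟨hiA, hc⟩
        obtain ⟨k, hk1, hk2⟩ := hjA
        have hik : q i k = 0 := by have := htri i k j; have := hnn i k; linarith
        have e1 := hwt i j
        have e2 := hwt j k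
        have e3 := hwt i k
        rcases h01 k i with h | h <;> rw [h] at e3 <;> linarith
  · rintro ⟨r, A, hE, hA, hq⟩
    classical
    have q0 : ∀ i j, q i j = 0 ↔ (r i j ∨ (i ∈ A ∧ j ∉ A)) := by
      intro i j
      rcases h01 i j with h | h
      · simp only [h, eq_self_iff_true, true_iff]
        by_contra hc
        push_neg at hc
        have : q i j = 1 := (hq i j).2 ⟨hc.1, fun hm => hm.2 (hc.2 hm.1)⟩
        rw [h] at this; norm_num at this
      · rw [h]
        have := (hq i j).1 h
        constructor
        · intro h1; norm_num at h1
        · rintro (h1 | h1)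
          · exact absurd h1 this.1
          · exact absurd ⟨h1.1, h1.2⟩ this.2
    have hnn : ∀ i j, 0 ≤ q i j := by
      intro i j; rcases h01 i j with h | h <;> rw [h] <;> norm_num
    have hone : ∀ i j, q i j ≤ 1 := by
      intro i j; rcases h01 i j with h | h <;> rw [h] <;> norm_num
    refine ⟨⟨hnn, fun i => (q0 i i).2 (Or.inl (hE.refl i)), ?_⟩, fun i => if i ∈ A then 1 else 0,
      ?_, ?_⟩
    · intro i j k
      rcases h01 i k with h1 | h1; swap
      · have := hnn k j; have := hone i j; linarith
      rcases h01 k j with h2 | h2; swap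
      · have := hnn i k; have := hone i j; linarith
      have h3 : q i j = 0 := by
        rw [q0] at h1 h2 ⊢
        rcases h1 with h1 | h1 <;> rcases h2 with h2 | h2
        · exact Or.inl (hE.trans h1 h2)
        · exact Or.inr ⟨(hA i k h1).2 h2.1, h2.2⟩
        · exact Or.inr ⟨h1.1, fun hj => h1.2 ((hA k j h2).2 hj)⟩
        · exact absurd h2.1 h1.2
      rw [h3]; linarith [hnn i k, hnn k j]
    · intro i; dsimp only; split <;> norm_num
    · intro i j
      by_cases hi : i ∈ A <;> by_cases hj : j ∈ A <;> simp only [hi, hj, if_true, if_false]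
      · -- both in A: q i j = q j i
        have : q i j = q j i := by
          rcases h01 i j with h | h <;> rcases h01 j i with h' | h'
          · rw [h, h']
          · exfalso
            have := (hq j i).1 h'
            rw [q0] at h
            rcases h with h | h
            · exact this.1 (hE.symm h)
            · exact h.2 hj
          · exfalso
            have := (hq i j).1 h
            rw [q0] at h'
            rcases h' with h' | h'
            · exact this.1 (hE.symm h')
            · exact h'.2 hi
          · rw [h, h']
        rw [this]
      · -- i ∈ A, j ∉ A : q i j = 0, q j i = 1
        have h1 : q i j = 0 := (q0 i j).2 (Or.inr ⟨hi, hj⟩)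
        have h2 : q j i = 1 := (hq j i).2 ⟨fun hr => hj ((hA j i hr).2 hi), fun hm => hj hm.1⟩
        rw [h1, h2]; ring
      · have h1 : q j i = 0 := (q0 j i).2 (Or.inr ⟨hj, hi⟩)
        have h2 : q i j = 1 := (hq i j).2 ⟨fun hr => hi ((hA i j hr).2 hj), fun hm => hi hm.1⟩
        rw [h1, h2]; ring
      · have : q i j = q j i := by
          rcases h01 i j with h | h <;> rcases h01 j i with h' | h'
          · rw [h, h']
          · exfalso
            rw [q0] at h
            rcases h with h | h
            · exact ((hq j i).1 h').1 (hE.symm h)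
            · exact hi h.1
          · exfalso
            rw [q0] at h'
            rcases h' with h' | h'
            · exact ((hq i j).1 h).1 (hE.symm h')
            · exact hj h'.1
          · rw [h, h']
        rw [this]
end

section
/- Let n ≥ 1 and let p : Fin n → Fin n → ℝ be a symmetric function with p i j ∈ {0, 1} for all i, j. Then p is a partial semimetric on Fin n if and only if there exist an equivalence relation ∼ on Fin n and a set S₀ ⊆ Fin n which is either empty or a single ∼-equivalence class, such that for all i, j: p i j = 1 ↔ ((i ∈ S₀ ∧ j ∈ S₀) ∨ ¬(i ∼ j)). (Thus the 0,1-valued partial semimetrics are exactly the partial multicuts γ(S₀; S₁, …, S_t) = J(S₀) + δ(S₀, S₁, …, S_t).) -/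
/-- the 0,1-valued partial semimetrics are exactly the partial
multicuts `γ(S₀; S₁, …, S_t) = J(S₀) + δ(S₀, S₁, …, S_t)`. -/
theorem stmt_13 (n : ℕ) (hn : 1 ≤ n) (p : Fin n → Fin n → ℝ)
    (hsym : ∀ i j, p i j = p j i)
    (h01 : ∀ i j, p i j = 0 ∨ p i j = 1) :
    IsPartialSemimetric p ↔
      ∃ (r : Fin n → Fin n → Prop) (S₀ : Set (Fin n)),
        Equivalence r ∧
        (S₀ = ∅ ∨ ∃ i₀, S₀ = {j | r i₀ j}) ∧
        ∀ i j, p i j = 1 ↔ ((i ∈ S₀ ∧ j ∈ S₀) ∨ ¬ r i j) := by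
  constructor
  · rintro ⟨⟨_, hnn, htri⟩, hmono⟩
    set S₀ : Set (Fin n) := {i | p i i = 1} with hS₀def
    have hmemS : ∀ i, i ∈ S₀ ↔ p i i = 1 := fun i => Iff.rfl
    have hdiag0 : ∀ i, i ∉ S₀ → p i i = 0 := by
      intro i hi
      rcases h01 i i with h | h
      · exact h
      · exact absurd ((hmemS i).mpr h) hi
    have hone : ∀ i j, i ∈ S₀ → p i j = 1 := by
      intro i j hi
      rcases h01 i j with h | h
      · have := hmono i j
        rw [(hmemS i).mp hi] at this
        linarith
      · exact h
    refine ⟨fun i j => (i ∈ S₀ ∧ j ∈ S₀) ∨ (i ∉ S₀ ∧ j ∉ S₀ ∧ p i j = 0), S₀, ?_, ?_, ?_⟩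
    · refine ⟨?_, ?_, ?_⟩
      · intro i
        by_cases h : i ∈ S₀
        · exact Or.inl ⟨h, h⟩
        · exact Or.inr ⟨h, h, hdiag0 i h⟩
      · rintro i j (⟨hi, hj⟩ | ⟨hi, hj, hp⟩)
        · exact Or.inl ⟨hj, hi⟩
        · exact Or.inr ⟨hj, hi, (hsym j i).trans hp⟩
      · rintro i j k (⟨hi, hj⟩ | ⟨hi, hj, hp⟩) (⟨hj', hk⟩ | ⟨hj', hk, hq⟩)
        · exact Or.inl ⟨hi, hk⟩
        · exact absurd hj hj'
        · exact absurd hj' hj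
        · refine Or.inr ⟨hi, hk, ?_⟩
          have ht := htri i k j
          have hjj := hdiag0 j hj
          rcases h01 i k with h | h
          · exact h
          · rw [hp, hq, hjj, h] at ht; linarith
    · by_cases h : S₀ = ∅
      · exact Or.inl h
      · right
        rcases Set.nonempty_iff_ne_empty.mpr h with ⟨i₀, hi₀⟩
        refine ⟨i₀, ?_⟩
        ext j
        simp only [Set.mem_setOf_eq]
        constructor
        · intro hj; exact Or.inl ⟨hi₀, hj⟩
        · rintro (⟨_, hj⟩ | ⟨hi, _, _⟩)
          · exact hj
          · exact absurd hi₀ hi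
    · intro i j
      constructor
      · intro hp1
        by_cases hi : i ∈ S₀
        · by_cases hj : j ∈ S₀
          · exact Or.inl ⟨hi, hj⟩
          · exact Or.inr (by rintro (⟨_, hj'⟩ | ⟨hi', _, _⟩) <;> [exact hj hj'; exact hi' hi])
        · by_cases hj : j ∈ S₀
          · exact Or.inr (by rintro (⟨hi', _⟩ | ⟨_, hj', _⟩) <;> [exact hi hi'; exact hj' hj])
          · exact Or.inr (by
              rintro (⟨hi', _⟩ | ⟨_, _, hp0⟩)
              · exact hi hi'
              · rw [hp0] at hp1; norm_num at hp1)
      · rintro (⟨hi, _⟩ | hr)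
        · exact hone i j hi
        · rcases h01 i j with h | h
          · exfalso
            by_cases hi : i ∈ S₀
            · rw [hone i j hi] at h; norm_num at h
            · by_cases hj : j ∈ S₀
              · rw [hsym i j, hone j i hj] at h; norm_num at h
              · exact hr (Or.inr ⟨hi, hj, h⟩)
          · exact h
  · rintro ⟨r, S₀, heq, hclass, hiff⟩
    have hp0 : ∀ i j, p i j ≠ 1 → p i j = 0 := by
      intro i j h
      rcases h01 i j with h' | h'
      · exact h'
      · exact absurd h' h
    have hnonneg : ∀ i j, 0 ≤ p i j := by
      intro i j; rcases h01 i j with h | h <;> rw [h] <;> norm_num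
    have hle1 : ∀ i j, p i j ≤ 1 := by
      intro i j; rcases h01 i j with h | h <;> rw [h] <;> norm_num
    have hSnr : ∀ k ∈ S₀, ∀ j, j ∉ S₀ → ¬ r k j := by
      intro k hk j hj hrkj
      rcases hclass with h | ⟨i₀, h⟩
      · rw [h] at hk; exact hk
      · rw [h] at hk hj
        exact hj (heq.trans hk hrkj)
    have hmemdiag : ∀ k, k ∈ S₀ → p k k = 1 := fun k hk =>
      (hiff k k).mpr (Or.inl ⟨hk, hk⟩)
    have hdiagmem : ∀ k, p k k = 1 → k ∈ S₀ := by
      intro k hk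
      rcases (hiff k k).mp hk with ⟨h, _⟩ | h
      · exact h
      · exact absurd (heq.refl k) h
    have honeS : ∀ i k, k ∈ S₀ → p i k = 1 := by
      intro i k hk
      by_cases hi : i ∈ S₀
      · exact (hiff i k).mpr (Or.inl ⟨hi, hk⟩)
      · exact (hiff i k).mpr (Or.inr (fun hr => (hSnr k hk i hi) (heq.symm hr)))
    refine ⟨⟨hsym, fun i => hnonneg i i, ?_⟩, ?_⟩
    · intro i j k
      by_cases hk : k ∈ S₀
      · have h1 := honeS i k hk
        have h2 := hsym k j ▸ honeS j k hk
        have h3 := hmemdiag k hk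
        have := hle1 i j
        rw [h1, h3]
        rw [hsym k j, honeS j k hk]
        linarith
      · have hkk : p k k = 0 := by
          rcases h01 k k with h | h
          · exact h
          · exact absurd (hdiagmem k h) hk
        rw [hkk]
        rcases h01 i j with hij | hij
        · have := hnonneg i k; have := hnonneg k j; rw [hij]; linarith
        · rcases (hiff i j).mp hij with ⟨hi, _⟩ | hr
          · have : p i k = 1 :=
              (hiff i k).mpr (Or.inr (hSnr i hi k hk))
            have := hnonneg k j
            rw [hij]; linarith
          · have : ¬ r i k ∨ ¬ r k j := by
              by_contra h
              push_neg at h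
              exact hr (heq.trans h.1 h.2)
            rcases this with h | h
            · have h1 : p i k = 1 := (hiff i k).mpr (Or.inr h)
              have := hnonneg k j
              rw [hij, h1]; linarith
            · have h1 : p k j = 1 := (hiff k j).mpr (Or.inr h)
              have := hnonneg i k
              rw [hij, h1]; linarith
    · intro i j
      by_cases hii : p i i = 1
      · have hi := hdiagmem i hii
        have : p i j = 1 := hsym i j ▸ honeS j i hi
        rw [hii, this]
      · rw [hp0 i i hii]; exact hnonneg i j
end

section
/- Let n ≥ 1. The set of 0,1-valued partial semimetrics on Fin n (i.e., symmetric functions p : Fin n → Fin n → {0,1} that are partial semimetrics) is in bijection with the set of equivalence relations (Setoids) on Fin (n+1); in particular its cardinality is the Bell number B(n+1). -/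
open scoped Classical

noncomputable def toP {n : ℕ} (s : Setoid (Fin (n + 1))) : Fin n → Fin n → ℝ :=
  fun i j =>
    if s.r i.castSucc j.castSucc ∧ ¬ s.r i.castSucc (Fin.last n) then 0 else 1

lemma toP_props {n : ℕ} (s : Setoid (Fin (n + 1))) :
    (∀ i j, toP s i j = 0 ∨ toP s i j = 1) ∧ IsPartialSemimetric (toP s) := by
  have hiff : ∀ i j : Fin n,
      ((s.r i.castSucc j.castSucc ∧ ¬ s.r i.castSucc (Fin.last n)) ↔
       (s.r j.castSucc i.castSucc ∧ ¬ s.r j.castSucc (Fin.last n))) := by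
    intro i j
    constructor
    · rintro ⟨h1, h2⟩
      exact ⟨s.symm' h1, fun h => h2 (s.trans' h1 h)⟩
    · rintro ⟨h1, h2⟩
      exact ⟨s.symm' h1, fun h => h2 (s.trans' h1 h)⟩
  refine ⟨?_, ⟨⟨?_, ?_, ?_⟩, ?_⟩⟩
  · intro i j; unfold toP; split_ifs <;> simp
  · intro i j; unfold toP
    split_ifs with h1 h2 h2
    · rfl
    · exact absurd ((hiff i j).mp h1) h2
    · exact absurd ((hiff j i).mp h2) h1
    · rfl
  · intro i; unfold toP; split_ifs <;> norm_num
  · intro i j k; unfold toP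
    have hAB : (s.r i.castSucc k.castSucc ∧ ¬ s.r i.castSucc (Fin.last n)) →
        (s.r k.castSucc j.castSucc ∧ ¬ s.r k.castSucc (Fin.last n)) →
        (s.r i.castSucc j.castSucc ∧ ¬ s.r i.castSucc (Fin.last n)) :=
      fun hA hB => ⟨s.trans' hA.1 hB.1, hA.2⟩
    have hAD : (s.r i.castSucc k.castSucc ∧ ¬ s.r i.castSucc (Fin.last n)) →
        (s.r k.castSucc k.castSucc ∧ ¬ s.r k.castSucc (Fin.last n)) :=
      fun hA => ⟨s.refl' _, fun h => hA.2 (s.trans' hA.1 h)⟩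
    have hBD : (s.r k.castSucc j.castSucc ∧ ¬ s.r k.castSucc (Fin.last n)) →
        (s.r k.castSucc k.castSucc ∧ ¬ s.r k.castSucc (Fin.last n)) :=
      fun hB => ⟨s.refl' _, hB.2⟩
    split_ifs <;> try norm_num
    all_goals tauto
  · intro i j; unfold toP
    have h12 : (s.r i.castSucc j.castSucc ∧ ¬ s.r i.castSucc (Fin.last n)) →
        (s.r i.castSucc i.castSucc ∧ ¬ s.r i.castSucc (Fin.last n)) :=
      fun h => ⟨s.refl' _, h.2⟩
    split_ifs <;> try norm_num
    all_goals tauto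

lemma toP_diag_eq_one {n : ℕ} (s : Setoid (Fin (n + 1))) (i : Fin n) :
    toP s i i = 1 ↔ s.r i.castSucc (Fin.last n) := by
  unfold toP
  split_ifs with h
  · constructor
    · intro h01; exact absurd h01 (by norm_num)
    · intro hr; exact absurd hr h.2
  · constructor
    · intro _
      by_contra hr
      exact h ⟨s.refl' _, hr⟩
    · intro _; rfl

lemma toP_r_iff {n : ℕ} (s : Setoid (Fin (n + 1))) (i j : Fin n) :
    s.r i.castSucc j.castSucc ↔
      (toP s i j = 0 ∨ (toP s i i = 1 ∧ toP s j j = 1)) := by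
  constructor
  · intro hr
    by_cases hl : s.r i.castSucc (Fin.last n)
    · exact Or.inr ⟨(toP_diag_eq_one s i).mpr hl,
        (toP_diag_eq_one s j).mpr (s.trans' (s.symm' hr) hl)⟩
    · left; unfold toP; rw [if_pos ⟨hr, hl⟩]
  · rintro (h0 | ⟨h1, h2⟩)
    · unfold toP at h0
      by_cases hc : s.r i.castSucc j.castSucc ∧ ¬ s.r i.castSucc (Fin.last n)
      · exact hc.1
      · rw [if_neg hc] at h0; exact absurd h0 one_ne_zero
    · exact s.trans' ((toP_diag_eq_one s i).mp h1)
        (s.symm' ((toP_diag_eq_one s j).mp h2))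

/-- the 0,1-valued partial semimetrics on `Fin n` are in bijection
with the equivalence relations on `Fin (n+1)`; hence there are `B(n+1)` of them
(the Bell number). -/
theorem stmt_14 (n : ℕ) (hn : 1 ≤ n) :
    Nonempty
      ({p : Fin n → Fin n → ℝ //
          (∀ i j, p i j = 0 ∨ p i j = 1) ∧ IsPartialSemimetric p}
        ≃ Setoid (Fin (n + 1))) := by
  have cne : ∀ i : Fin n, i.castSucc ≠ Fin.last n := fun i =>
    (Fin.castSucc_lt_last i).ne
  set g : Setoid (Fin (n + 1)) →
      {p : Fin n → Fin n → ℝ //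
        (∀ i j, p i j = 0 ∨ p i j = 1) ∧ IsPartialSemimetric p} :=
    fun s => ⟨toP s, toP_props s⟩ with hg
  have hinj : Function.Injective g := by
    intro s t h
    have hT : toP s = toP t := congrArg Subtype.val h
    apply Setoid.ext
    intro a b
    induction a using Fin.lastCases with
    | last =>
      induction b using Fin.lastCases with
      | last => exact ⟨fun _ => t.refl' _, fun _ => s.refl' _⟩
      | cast j =>
        constructor
        · intro hr
          exact t.symm' ((toP_diag_eq_one t j).mp
            (by rw [← hT]; exact (toP_diag_eq_one s j).mpr (s.symm' hr)))
        · intro hr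
          exact s.symm' ((toP_diag_eq_one s j).mp
            (by rw [hT]; exact (toP_diag_eq_one t j).mpr (t.symm' hr)))
    | cast i =>
      induction b using Fin.lastCases with
      | last =>
        constructor
        · intro hr
          exact (toP_diag_eq_one t i).mp
            (by rw [← hT]; exact (toP_diag_eq_one s i).mpr hr)
        · intro hr
          exact (toP_diag_eq_one s i).mp
            (by rw [hT]; exact (toP_diag_eq_one t i).mpr hr)
      | cast j =>
        rw [toP_r_iff s i j, toP_r_iff t i j, hT]
  have hsurj : Function.Surjective g := by
    rintro ⟨p, h01, ⟨⟨hsym, hnn, htri⟩, hle⟩⟩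
    -- derived facts
    have f1 : ∀ i j : Fin n, p i j = 0 → p i i = 0 := fun i j h =>
      le_antisymm (h ▸ hle i j) (hnn i)
    have f2 : ∀ i j : Fin n, p i i = 1 → p i j = 1 := by
      intro i j h
      rcases h01 i j with h0 | h1
      · have := hle i j; rw [h, h0] at this; linarith
      · exact h1
    have f3 : ∀ i j k : Fin n, p i k = 0 → p k j = 0 → p i j = 0 := by
      intro i j k hik hkj
      have h1 := htri i j k
      have h2 := hnn k
      have h3 := hnn i
      have h4 := hle i j
      rw [hik, hkj] at h1
      linarith
    set A : Fin (n + 1) → Prop := fun x =>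
      x = Fin.last n ∨ ∃ i : Fin n, x = i.castSucc ∧ p i i = 1 with hA
    set r : Fin (n + 1) → Fin (n + 1) → Prop := fun x y =>
      (A x ∧ A y) ∨ ∃ i j : Fin n, x = i.castSucc ∧ y = j.castSucc ∧ p i j = 0
      with hr
    have hrefl : ∀ x, r x x := by
      intro x
      induction x using Fin.lastCases with
      | last => exact Or.inl ⟨Or.inl rfl, Or.inl rfl⟩
      | cast i =>
        rcases h01 i i with h0 | h1
        · exact Or.inr ⟨i, i, rfl, rfl, h0⟩
        · exact Or.inl ⟨Or.inr ⟨i, rfl, h1⟩, Or.inr ⟨i, rfl, h1⟩⟩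
    have hsymm : ∀ x y, r x y → r y x := by
      rintro x y (⟨hx, hy⟩ | ⟨i, j, hx, hy, hp⟩)
      · exact Or.inl ⟨hy, hx⟩
      · exact Or.inr ⟨j, i, hy, hx, (hsym i j) ▸ hp⟩
    -- A fails on castSucc points with diagonal zero
    have hAcast : ∀ i : Fin n, A i.castSucc → p i i = 1 := by
      rintro i (h | ⟨a, ha, hp⟩)
      · exact absurd h (cne i)
      · rwa [← Fin.castSucc_injective n ha] at hp
    have htrans : ∀ x y z, r x y → r y z → r x z := by
      rintro x y z (⟨hx, hy⟩ | ⟨i, j, hx, hy, hp⟩) (⟨hy', hz⟩ | ⟨j', k, hy', hz, hp'⟩)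
      · exact Or.inl ⟨hx, hz⟩
      · -- A y and y = j'.castSucc with p j' k = 0: contradiction
        subst hy'
        have h1 := hAcast j' hy
        have h0 := f1 j' k hp'
        rw [h1] at h0; exact absurd h0 one_ne_zero
      · subst hy
        have h1 := hAcast j hy'
        have h0 := f1 j i ((hsym i j) ▸ hp)
        rw [h1] at h0; exact absurd h0 one_ne_zero
      · subst hy; subst hz; subst hx
        have hjj : j = j' := Fin.castSucc_injective n hy'
        subst hjj
        exact Or.inr ⟨i, k, rfl, rfl, f3 i k j hp hp'⟩
    set s : Setoid (Fin (n + 1)) := ⟨r, hrefl, fun {x y} h => hsymm x y h,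
      fun {x y z} h h' => htrans x y z h h'⟩ with hs
    refine ⟨s, ?_⟩
    rw [hg]
    apply Subtype.ext
    funext i j
    show toP s i j = p i j
    have hAlast : A (Fin.last n) := Or.inl rfl
    rcases h01 i j with h0 | h1
    · unfold toP
      rw [if_pos, h0]
      constructor
      · exact Or.inr ⟨i, j, rfl, rfl, h0⟩
      · rintro (⟨hAi, _⟩ | ⟨a, b, ha, hb, _⟩)
        · have := hAcast i hAi
          rw [f1 i j h0] at this; exact absurd this.symm one_ne_zero
        · exact absurd hb.symm (cne b)
    · unfold toP
      rw [if_neg, h1]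
      rintro ⟨hr1, hr2⟩
      have hAi : ¬ A i.castSucc := fun hAi => hr2 (Or.inl ⟨hAi, hAlast⟩)
      rcases hr1 with ⟨hAi', _⟩ | ⟨a, b, ha, hb, hp⟩
      · exact hAi hAi'
      · have haa : a = i := Fin.castSucc_injective n ha.symm
        have hbb : b = j := Fin.castSucc_injective n hb.symm
        subst haa; subst hbb
        rw [h1] at hp; exact absurd hp one_ne_zero
  exact ⟨(Equiv.ofBijective g ⟨hinj, hsurj⟩).symm⟩
end

section
/- Let n ≥ 1, let ∼ be an equivalence relation on Fin n with multicut δ (δ i j = 1 if ¬(i ∼ j), else 0), and let b : Fin n → ℤ. For each equivalence class C of ∼ put r_C = Σ_{i ∈ C} b i, and let Σ_b = Σ_i b i. Then −Σ_{i,j ∈ Fin n} b i · b j · δ i j = Σ_C r_C (r_C − Σ_b), the sum over all equivalence classes C. Consequently, if Σ_b ∈ {0, 1}, then −Σ_{i,j} b i · b j · δ i j ≥ 0, i.e., every multicut semimetric is a hypermetric. -/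
/-- evaluation of the hypermetric form on a multicut semimetric:
`−Σ_{i,j} b i b j δ i j = Σ_C r_C (r_C − Σ_b)` (sum over equivalence classes),
whence every multicut is hypermetric. -/
theorem stmt_15 (n : ℕ) (hn : 1 ≤ n) (s : Setoid (Fin n))
    [DecidableRel ((· ≈ ·) : Fin n → Fin n → Prop)]
    (b : Fin n → ℤ) (δ : Fin n → Fin n → ℝ)
    (hδ0 : ∀ i j, i ≈ j → δ i j = 0)
    (hδ1 : ∀ i j, ¬ i ≈ j → δ i j = 1)
    (r : Quotient s → ℤ)
    (hr : ∀ c : Quotient s,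
      r c = ∑ i ∈ Finset.univ.filter (fun i => Quotient.mk s i = c), b i) :
    (-∑ i, ∑ j, (b i : ℝ) * (b j : ℝ) * δ i j
        = ∑ c : Quotient s, (r c : ℝ) * ((r c : ℝ) - ((∑ i, b i : ℤ) : ℝ))) ∧
    (((∑ i, b i) = 0 ∨ (∑ i, b i) = 1) →
      0 ≤ -∑ i, ∑ j, (b i : ℝ) * (b j : ℝ) * δ i j) := by
  classical
  set S : ℤ := ∑ i, b i with hS
  -- δ in terms of the quotient
  have hδ : ∀ i j, δ i j = 1 - (if Quotient.mk s i = Quotient.mk s j then (1:ℝ) else 0) := by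
    intro i j
    by_cases h : i ≈ j
    · rw [hδ0 i j h, if_pos (Quotient.sound h)]; ring
    · rw [hδ1 i j h, if_neg (fun he => h (Quotient.exact he))]; ring
  -- r sums to S
  have hrS : ∑ c : Quotient s, r c = S := by
    simp only [hr, hS]
    exact Finset.sum_fiberwise Finset.univ (fun i => Quotient.mk s i) b
  -- inner sum
  have hinner : ∀ i, ∑ j, (b i : ℝ) * (b j : ℝ) *
      (if Quotient.mk s i = Quotient.mk s j then (1:ℝ) else 0) = (b i : ℝ) * (r (Quotient.mk s i) : ℝ) := by
    intro i
    rw [hr]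
    push_cast
    rw [Finset.mul_sum]
    rw [Finset.sum_filter]
    congr 1
    ext j
    by_cases h : Quotient.mk s i = Quotient.mk s j
    · rw [if_pos h, if_pos h.symm]; ring
    · rw [if_neg h, if_neg (fun he => h he.symm)]; ring
  have key : -∑ i, ∑ j, (b i : ℝ) * (b j : ℝ) * δ i j
      = ∑ c : Quotient s, (r c : ℝ) * ((r c : ℝ) - (S : ℝ)) := by
    have e1 : ∑ i, ∑ j, (b i : ℝ) * (b j : ℝ) * δ i j
        = (∑ i, (b i : ℝ)) * (∑ j, (b j : ℝ))
          - ∑ i, (b i : ℝ) * (r (Quotient.mk s i) : ℝ) := by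
      simp only [hδ, mul_sub, mul_one, Finset.sum_sub_distrib]
      congr 1
      · rw [Finset.sum_mul_sum]
      · exact Finset.sum_congr rfl (fun i _ => hinner i)
    have e2 : ∑ i, (b i : ℝ) * (r (Quotient.mk s i) : ℝ)
        = ∑ c : Quotient s, (r c : ℝ) * (r c : ℝ) := by
      rw [← Finset.sum_fiberwise Finset.univ (fun i => Quotient.mk s i)
        (fun i => (b i : ℝ) * (r (Quotient.mk s i) : ℝ))]
      refine Finset.sum_congr rfl (fun c _ => ?_)
      have : ∑ i ∈ Finset.univ.filter (fun i => Quotient.mk s i = c),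
          (b i : ℝ) * (r (Quotient.mk s i) : ℝ)
          = ∑ i ∈ Finset.univ.filter (fun i => Quotient.mk s i = c),
          (b i : ℝ) * (r c : ℝ) := by
        refine Finset.sum_congr rfl (fun i hi => ?_)
        rw [(Finset.mem_filter.mp hi).2]
      rw [this, ← Finset.sum_mul, hr c]
      push_cast
      ring
    have e3 : (∑ i, (b i : ℝ)) = (S : ℝ) := by push_cast [hS]; ring
    rw [e1, e2, e3]
    have : ∑ c : Quotient s, (r c : ℝ) * ((r c : ℝ) - (S : ℝ))
        = ∑ c : Quotient s, (r c : ℝ) * (r c : ℝ) - (∑ c : Quotient s, (r c : ℝ)) * (S : ℝ) := by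
      rw [Finset.sum_mul, ← Finset.sum_sub_distrib]
      exact Finset.sum_congr rfl (fun c _ => by ring)
    rw [this]
    have e4 : (∑ c : Quotient s, (r c : ℝ)) = (S : ℝ) := by
      rw [← hrS]; push_cast; ring
    rw [e4]; ring
  refine ⟨key, fun hcases => ?_⟩
  rw [key]
  apply Finset.sum_nonneg
  intro c _
  rcases hcases with h | h
  · rw [← hS] at *
    rw [h]
    push_cast
    simpa using mul_self_nonneg ((r c : ℝ))
  · rw [← hS] at *
    rw [h]
    push_cast
    rcases le_or_gt (r c) 0 with hc | hc
    · have h1 : (r c : ℝ) ≤ 0 := by exact_mod_cast hc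
      nlinarith
    · have h1 : (1:ℝ) ≤ (r c : ℝ) := by exact_mod_cast hc
      nlinarith
end

section
/- Let n ≥ 1, let ∼ be an equivalence relation on Fin n, and let S₀ ⊆ Fin n be either empty or a single ∼-equivalence class. Let p be the partial multicut: p i j = 1 if (i ∈ S₀ ∧ j ∈ S₀) ∨ ¬(i ∼ j), and p i j = 0 otherwise. Then for every b : Fin n → ℤ with Σ_i b i ∈ {0, 1}, the partial hypermetric inequality holds: −Σ_{i,j ∈ Fin n} b i · b j · p i j + Σ_i b i · p i i ≥ 0. (Thus every 0,1-valued partial semimetric is a partial hypermetric, i.e., 0,1-PMET_n ⊆ PHYP_n.) -/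
lemma int_le_sq_aux (a : ℤ) : a ≤ a * a := by
  rcases le_or_gt a 0 with h | h
  · exact h.trans (mul_self_nonneg a)
  · have h1 : 1 ≤ a := h
    nlinarith

lemma aux_main_16 (n : ℕ) (c : Fin n → Fin n) (T : Finset (Fin n))
    (p : Fin n → Fin n → ℝ)
    (hpT : ∀ i j, p i j = 1 - (if c i = c j ∧ c i ∈ T then (1:ℝ) else 0))
    (b : Fin n → ℤ) (hb : (∑ i, b i) = 0 ∨ (∑ i, b i) = 1) :
    0 ≤ -(∑ i, ∑ j, (b i : ℝ) * (b j : ℝ) * p i j) + ∑ i, (b i : ℝ) * p i i := by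
  classical
  set Bz : Fin n → ℤ := fun k => ∑ i ∈ Finset.univ.filter (fun i => c i = k), b i with hBz
  set B : Fin n → ℝ := fun k => ((Bz k : ℤ) : ℝ) with hB
  have fib : ∀ G : Fin n → ℝ, ∑ i, (b i : ℝ) * G (c i) = ∑ k, G k * B k := by
    intro G
    rw [← Finset.sum_fiberwise Finset.univ c (fun i => (b i : ℝ) * G (c i))]
    refine Finset.sum_congr rfl fun k _ => ?_
    have hBk : B k = ∑ i ∈ Finset.univ.filter (fun i => c i = k), (b i : ℝ) := by
      simp [hB, hBz]
    rw [hBk, Finset.mul_sum]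
    refine Finset.sum_congr rfl fun i hi => ?_
    have hci : c i = k := by simpa using (Finset.mem_filter.mp hi).2
    rw [hci, mul_comm]
  set σ : ℝ := ∑ i, (b i : ℝ) with hσdef
  have hσB : ∑ k, B k = σ := by
    have := fib (fun _ => 1)
    simpa using this.symm
  have hinner : ∀ i, ∑ j, (b j : ℝ) * (if c i = c j ∧ c i ∈ T then (1:ℝ) else 0)
      = (if c i ∈ T then B (c i) else 0) := by
    intro i
    rw [fib (fun k => if c i = k ∧ c i ∈ T then (1:ℝ) else 0)]
    by_cases hi : c i ∈ T
    · simp [hi]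
    · simp [hi]
  have hX : ∑ i, ∑ j, (b i : ℝ) * (b j : ℝ) * (if c i = c j ∧ c i ∈ T then (1:ℝ) else 0)
      = ∑ k ∈ T, B k * B k := by
    have h1 : ∀ i, ∑ j, (b i : ℝ) * (b j : ℝ) * (if c i = c j ∧ c i ∈ T then (1:ℝ) else 0)
        = (b i : ℝ) * (if c i ∈ T then B (c i) else 0) := by
      intro i
      rw [← hinner i, Finset.mul_sum]
      exact Finset.sum_congr rfl fun j _ => by ring
    calc ∑ i, ∑ j, (b i : ℝ) * (b j : ℝ) * (if c i = c j ∧ c i ∈ T then (1:ℝ) else 0)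
        = ∑ i, (b i : ℝ) * (fun k => if k ∈ T then B k else 0) (c i) :=
          Finset.sum_congr rfl fun i _ => h1 i
      _ = ∑ k, (fun k => if k ∈ T then B k else 0) k * B k := fib (fun k => if k ∈ T then B k else 0)
      _ = ∑ k, (if k ∈ T then B k * B k else 0) := by
          refine Finset.sum_congr rfl fun k _ => ?_
          by_cases hk : k ∈ T <;> simp [hk]
      _ = ∑ k ∈ T, B k * B k := Fintype.sum_ite_mem _ _
  have hD : ∑ i, (b i : ℝ) * p i i = σ - ∑ k ∈ T, B k := by
    have h1 : ∀ i, (b i : ℝ) * p i i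
        = (b i : ℝ) * (fun k => 1 - if k ∈ T then (1:ℝ) else 0) (c i) := by
      intro i
      rw [hpT]
      simp
    calc ∑ i, (b i : ℝ) * p i i
        = ∑ i, (b i : ℝ) * (fun k => 1 - if k ∈ T then (1:ℝ) else 0) (c i) :=
          Finset.sum_congr rfl fun i _ => h1 i
      _ = ∑ k, (fun k => 1 - if k ∈ T then (1:ℝ) else 0) k * B k := fib (fun k => 1 - if k ∈ T then (1:ℝ) else 0)
      _ = ∑ k, (B k - if k ∈ T then B k else 0) := by
          refine Finset.sum_congr rfl fun k _ => ?_
          by_cases hk : k ∈ T <;> simp [hk]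
      _ = σ - ∑ k ∈ T, B k := by
          rw [Finset.sum_sub_distrib, hσB, Fintype.sum_ite_mem]
  have hP : ∑ i, ∑ j, (b i : ℝ) * (b j : ℝ) * p i j = σ * σ - ∑ k ∈ T, B k * B k := by
    have h1 : ∀ i j, (b i : ℝ) * (b j : ℝ) * p i j
        = (b i : ℝ) * (b j : ℝ)
          - (b i : ℝ) * (b j : ℝ) * (if c i = c j ∧ c i ∈ T then (1:ℝ) else 0) := by
      intro i j; rw [hpT]; ring
    calc ∑ i, ∑ j, (b i : ℝ) * (b j : ℝ) * p i j
        = ∑ i, ∑ j, ((b i : ℝ) * (b j : ℝ)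
          - (b i : ℝ) * (b j : ℝ) * (if c i = c j ∧ c i ∈ T then (1:ℝ) else 0)) :=
          Finset.sum_congr rfl fun i _ => Finset.sum_congr rfl fun j _ => h1 i j
      _ = (∑ i, ∑ j, (b i : ℝ) * (b j : ℝ))
          - ∑ i, ∑ j, (b i : ℝ) * (b j : ℝ) * (if c i = c j ∧ c i ∈ T then (1:ℝ) else 0) := by
          rw [← Finset.sum_sub_distrib]
          exact Finset.sum_congr rfl fun i _ => by rw [Finset.sum_sub_distrib]
      _ = σ * σ - ∑ k ∈ T, B k * B k := by
          rw [hX, ← Finset.sum_mul_sum]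
  have hcast : σ = ((∑ i, b i : ℤ) : ℝ) := by rw [hσdef]; push_cast; rfl
  have hσ01 : σ = 0 ∨ σ = 1 := by
    rcases hb with h | h
    · left; rw [hcast, h]; norm_num
    · right; rw [hcast, h]; norm_num
  have hσσ : σ * σ = σ := by rcases hσ01 with h | h <;> rw [h] <;> ring
  rw [hP, hD]
  have key : -(σ * σ - ∑ k ∈ T, B k * B k) + (σ - ∑ k ∈ T, B k)
      = ∑ k ∈ T, (B k * B k - B k) := by
    rw [hσσ, Finset.sum_sub_distrib]; ring
  rw [key]
  refine Finset.sum_nonneg fun k _ => ?_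
  have : Bz k ≤ Bz k * Bz k := int_le_sq_aux (Bz k)
  have : ((Bz k : ℤ) : ℝ) ≤ ((Bz k * Bz k : ℤ) : ℝ) := by exact_mod_cast this
  simp only [hB]
  push_cast at this ⊢
  linarith

/-- every partial multicut satisfies all partial hypermetric
inequalities, i.e. `0,1`-`PMET_n ⊆ PHYP_n`. -/
theorem stmt_16 (n : ℕ) (hn : 1 ≤ n)
    (r : Fin n → Fin n → Prop) (hr : Equivalence r)
    (S₀ : Set (Fin n)) (hS₀ : S₀ = ∅ ∨ ∃ i₀, S₀ = {j | r i₀ j})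
    (p : Fin n → Fin n → ℝ)
    (hp1 : ∀ i j, ((i ∈ S₀ ∧ j ∈ S₀) ∨ ¬ r i j) → p i j = 1)
    (hp0 : ∀ i j, ¬((i ∈ S₀ ∧ j ∈ S₀) ∨ ¬ r i j) → p i j = 0) :
    ∀ b : Fin n → ℤ, ((∑ i, b i) = 0 ∨ (∑ i, b i) = 1) →
      0 ≤ -(∑ i, ∑ j, (b i : ℝ) * (b j : ℝ) * p i j) + ∑ i, (b i : ℝ) * p i i := by
  classical
  intro b hb
  -- canonical representative of each equivalence class
  have hmem : ∀ i : Fin n, i ∈ Finset.univ.filter (fun j => r i j) := by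
    intro i; simp [hr.refl i]
  set c : Fin n → Fin n :=
    fun i => (Finset.univ.filter (fun j => r i j)).min' ⟨i, hmem i⟩ with hc
  have hrc : ∀ i, r i (c i) := by
    intro i
    have := Finset.min'_mem (Finset.univ.filter (fun j => r i j)) ⟨i, hmem i⟩
    simpa using this
  have hcls : ∀ i j, r i j →
      Finset.univ.filter (fun k => r i k) = Finset.univ.filter (fun k => r j k) := by
    intro i j hij
    ext x
    simp only [Finset.mem_filter, Finset.mem_univ, true_and]
    exact ⟨fun h => hr.trans (hr.symm hij) h, fun h => hr.trans hij h⟩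
  have hceq : ∀ i j, r i j ↔ c i = c j := by
    intro i j
    constructor
    · intro hij
      simp only [hc]
      congr 1
      exact hcls i j hij
    · intro h
      exact hr.trans (hrc i) (h ▸ hr.symm (hrc j))
  rcases hS₀ with h0 | ⟨i₀, h0⟩
  · refine aux_main_16 n c Finset.univ p ?_ b hb
    intro i j
    by_cases hij : c i = c j
    · have hrij : r i j := (hceq i j).mpr hij
      have : p i j = 0 := hp0 i j (by simp [h0, hrij])
      simp [this, hij]
    · have : p i j = 1 := hp1 i j (Or.inr fun h => hij ((hceq i j).mp h))
      simp [this, hij]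
  · refine aux_main_16 n c (Finset.univ.filter (fun k => k ≠ c i₀)) p ?_ b hb
    intro i j
    have hiS : ∀ x : Fin n, x ∈ S₀ ↔ c x = c i₀ := by
      intro x
      rw [h0]
      simp only [Set.mem_setOf_eq]
      constructor
      · intro h; exact ((hceq i₀ x).mp h).symm
      · intro h; exact (hceq i₀ x).mpr h.symm
    by_cases hij : c i = c j
    · have hrij : r i j := (hceq i j).mpr hij
      by_cases hi0 : c i = c i₀
      · have hj0 : c j = c i₀ := by rw [← hij]; exact hi0
        have : p i j = 1 := hp1 i j (Or.inl ⟨(hiS i).mpr hi0, (hiS j).mpr hj0⟩)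
        simp [this, hij, hi0, hj0]
      · have : p i j = 0 := by
          refine hp0 i j ?_
          push_neg
          refine ⟨fun h _ => ?_, hrij⟩
          exact hi0 ((hiS i).mp h)
        have hj0 : ¬ c j = c i₀ := by rw [← hij]; exact hi0
        simp [this, hij, hi0, hj0]
    · have : p i j = 1 := hp1 i j (Or.inr fun h => hij ((hceq i j).mp h))
      simp [this, hij]
end

section
/- Let n ≥ 1. Consider the subspace E of real n × n matrices E with zero diagonal such that Σ_{i,j} E i j · q i j = 0 for every quasi-semimetric q on Fin n that is weightable with some nonnegative weight. Then E is spanned by the matrices E_{ijk} (for pairwise distinct i, j, k ∈ Fin n) having entry +1 at positions (i,j), (j,k), (k,i), entry −1 at positions (j,i), (k,j), (i,k), and 0 elsewhere; in particular, E has dimension (n−1 choose 2). (Equivalently: every weightable quasi-semimetric q satisfies q i j + q j k + q k i = q j i + q k j + q i k for all i, j, k, and these are, up to linear combination, the only linear equalities valid on the cone WQMET_n.) -/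
/-- A weightable quasi-semimetric with nonnegative weight (element of `WQMET_n`). -/
def IsWQMET {n : ℕ} (q : Fin n → Fin n → ℝ) : Prop :=
  IsQuasiSemimetric q ∧
    ∃ w : Fin n → ℝ, (∀ i, 0 ≤ w i) ∧ ∀ i j, q i j + w i = q j i + w j

/-- The matrix `E_{ijk}` with entries `+1` at `(i,j), (j,k), (k,i)`,
`−1` at `(j,i), (k,j), (i,k)` and `0` elsewhere. -/
def Emat {n : ℕ} (i j k : Fin n) : Matrix (Fin n) (Fin n) ℝ :=
  Matrix.of fun a b =>
    (if (a = i ∧ b = j) ∨ (a = j ∧ b = k) ∨ (a = k ∧ b = i) then (1 : ℝ) else 0)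
      - (if (a = j ∧ b = i) ∨ (a = k ∧ b = j) ∨ (a = i ∧ b = k) then (1 : ℝ) else 0)

lemma wqmet_grad {n : ℕ} (w : Fin n → ℝ) (h0 : ∀ i, 0 ≤ w i) (h1 : ∀ i, w i ≤ 1) :
    IsWQMET (fun i j => if i = j then (0:ℝ) else 1 + (w j - w i) / 2) := by
  refine ⟨⟨?_, ?_, ?_⟩, w, h0, ?_⟩
  · intro i j
    rcases eq_or_ne i j with rfl | h
    · simp
    · simp [h]; nlinarith [h0 j, h1 i]
  · intro i; simp
  · intro i j k
    rcases eq_or_ne i j with rfl | hij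
    · rcases eq_or_ne i k with rfl | hik
      · simp
      · simp [hik, Ne.symm hik]
        nlinarith [h0 i, h0 k, h1 i, h1 k]
    · rcases eq_or_ne i k with rfl | hik
      · simp [hij]
      · rcases eq_or_ne k j with rfl | hkj
        · simp [hij]
        · simp [hij, hik, hkj]
          nlinarith [h0 k, h1 k, h0 i, h1 i, h0 j, h1 j]
  · intro i j
    rcases eq_or_ne i j with rfl | h
    · ring
    · simp [h, Ne.symm h]; ring

lemma wqmet_cut {n : ℕ} (χ : Fin n → ℝ) :
    IsWQMET (fun i j => |χ i - χ j|) := by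
  refine ⟨⟨fun i j => abs_nonneg _, fun i => by simp, fun i j k => ?_⟩, 0, fun i => le_refl 0, ?_⟩
  · exact abs_sub_le _ _ _
  · intro i j; simp [abs_sub_comm]

def ind {n : ℕ} (a : Fin n) : Fin n → ℝ := fun i => if i = a then 1 else 0

section
variable {n : ℕ} (E : Matrix (Fin n) (Fin n) ℝ)

lemma collapse_right (a : Fin n) :
    ∑ i, ∑ j, E i j * ind a j = ∑ i, E i a := by
  simp [ind, mul_ite, mul_one, mul_zero]

lemma collapse_left (a : Fin n) :
    ∑ i, ∑ j, E i j * ind a i = ∑ j, E a j := by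
  rw [Finset.sum_comm]
  simp [ind, mul_ite, mul_one, mul_zero]

lemma collapse_both (a b : Fin n) :
    ∑ i, ∑ j, E i j * (ind a i * ind b j) = E a b := by
  simp [ind, mul_ite, mul_one, mul_zero, ite_mul, zero_mul]

variable {E}

lemma constraint_total (hd : ∀ i, E i i = 0)
    (hq : ∀ q : Fin n → Fin n → ℝ, IsWQMET q → (∑ i, ∑ j, E i j * q i j) = 0) :
    ∑ i, ∑ j, E i j = 0 := by
  have h := hq _ (wqmet_grad (fun _ => 0) (fun _ => le_refl 0) (fun _ => zero_le_one))
  calc ∑ i, ∑ j, E i j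
      = ∑ i, ∑ j, E i j * (if i = j then (0:ℝ) else 1 + ((0:ℝ) - 0) / 2) := by
        refine Finset.sum_congr rfl fun i _ => Finset.sum_congr rfl fun j _ => ?_
        rcases eq_or_ne i j with rfl | h
        · simp [hd i]
        · simp [h]
    _ = 0 := h

lemma constraint_grad (hd : ∀ i, E i i = 0)
    (hq : ∀ q : Fin n → Fin n → ℝ, IsWQMET q → (∑ i, ∑ j, E i j * q i j) = 0)
    (a : Fin n) : ∑ i, E i a = ∑ j, E a j := by
  have h := hq _ (wqmet_grad (ind a) (fun i => by simp [ind]; split <;> norm_num)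
      (fun i => by simp [ind]; split <;> norm_num))
  have key : ∑ i, ∑ j, E i j * (1 + (ind a j - ind a i) / 2) = 0 := by
    rw [← h]
    refine Finset.sum_congr rfl fun i _ => Finset.sum_congr rfl fun j _ => ?_
    rcases eq_or_ne i j with rfl | hij
    · simp [hd i]
    · simp [hij]
  have expand : ∑ i, ∑ j, E i j * (1 + (ind a j - ind a i) / 2)
      = (∑ i, ∑ j, E i j) + (∑ i, ∑ j, E i j * ind a j) / 2 - (∑ i, ∑ j, E i j * ind a i) / 2 := by
    have step : ∀ i j : Fin n, E i j * (1 + (ind a j - ind a i) / 2)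
        = E i j + (E i j * ind a j) / 2 - (E i j * ind a i) / 2 := fun i j => by ring
    simp only [step, Finset.sum_add_distrib, Finset.sum_sub_distrib, ← Finset.sum_div]
  rw [expand, constraint_total hd hq, collapse_right, collapse_left] at key
  linarith [key]

lemma constraint_cut1 (hd : ∀ i, E i i = 0)
    (hq : ∀ q : Fin n → Fin n → ℝ, IsWQMET q → (∑ i, ∑ j, E i j * q i j) = 0)
    (a : Fin n) : (∑ j, E a j) + (∑ i, E i a) = 0 := by
  have h := hq _ (wqmet_cut (ind a))
  have key : ∑ i, ∑ j, E i j * (ind a i + ind a j - 2 * (ind a i * ind a j)) = 0 := by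
    rw [← h]
    refine Finset.sum_congr rfl fun i _ => Finset.sum_congr rfl fun j _ => ?_
    congr 1
    unfold ind
    by_cases hi : i = a <;> by_cases hj : j = a <;> simp [hi, hj] <;> norm_num
  have expand : ∑ i, ∑ j, E i j * (ind a i + ind a j - 2 * (ind a i * ind a j))
      = (∑ i, ∑ j, E i j * ind a i) + (∑ i, ∑ j, E i j * ind a j)
        - 2 * (∑ i, ∑ j, E i j * (ind a i * ind a j)) := by
    have step : ∀ i j : Fin n, E i j * (ind a i + ind a j - 2 * (ind a i * ind a j))
        = E i j * ind a i + E i j * ind a j - 2 * (E i j * (ind a i * ind a j)) :=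
      fun i j => by ring
    simp only [step, Finset.sum_add_distrib, Finset.sum_sub_distrib, ← Finset.mul_sum]
  rw [expand, collapse_right, collapse_left, collapse_both, hd a] at key
  linarith [key]

lemma constraint_cut2 (hd : ∀ i, E i i = 0)
    (hq : ∀ q : Fin n → Fin n → ℝ, IsWQMET q → (∑ i, ∑ j, E i j * q i j) = 0)
    {a b : Fin n} (hab : a ≠ b) :
    (∑ j, E a j) + (∑ i, E i a) + (∑ j, E b j) + (∑ i, E i b)
      - 2 * (E a b + E b a) = 0 := by
  have h := hq _ (wqmet_cut (fun i => ind a i + ind b i))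
  have key : ∑ i, ∑ j, E i j * ((ind a i + ind b i) + (ind a j + ind b j)
      - 2 * ((ind a i + ind b i) * (ind a j + ind b j))) = 0 := by
    rw [← h]
    refine Finset.sum_congr rfl fun i _ => Finset.sum_congr rfl fun j _ => ?_
    congr 1
    unfold ind
    by_cases hia : i = a <;> by_cases hib : i = b <;> by_cases hja : j = a <;>
      by_cases hjb : j = b <;>
      first
        | (exfalso; exact hab (by rw [← hia, hib] <;> rw [← hja, hjb]))
        | (simp [hia, hib, hja, hjb, hab, Ne.symm hab]; try norm_num)
  have expand : ∑ i, ∑ j, E i j * ((ind a i + ind b i) + (ind a j + ind b j)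
      - 2 * ((ind a i + ind b i) * (ind a j + ind b j)))
      = (∑ i, ∑ j, E i j * ind a i) + (∑ i, ∑ j, E i j * ind b i)
        + (∑ i, ∑ j, E i j * ind a j) + (∑ i, ∑ j, E i j * ind b j)
        - 2 * ((∑ i, ∑ j, E i j * (ind a i * ind a j))
          + (∑ i, ∑ j, E i j * (ind a i * ind b j))
          + (∑ i, ∑ j, E i j * (ind b i * ind a j))
          + (∑ i, ∑ j, E i j * (ind b i * ind b j))) := by
    have step : ∀ i j : Fin n, E i j * ((ind a i + ind b i) + (ind a j + ind b j)
        - 2 * ((ind a i + ind b i) * (ind a j + ind b j)))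
        = E i j * ind a i + E i j * ind b i + E i j * ind a j + E i j * ind b j
          - 2 * (E i j * (ind a i * ind a j) + E i j * (ind a i * ind b j)
            + E i j * (ind b i * ind a j) + E i j * (ind b i * ind b j)) :=
      fun i j => by ring
    simp only [step, Finset.sum_add_distrib, Finset.sum_sub_distrib, ← Finset.mul_sum]
  rw [expand, collapse_right, collapse_right, collapse_left, collapse_left,
    collapse_both, collapse_both, collapse_both, collapse_both, hd a, hd b] at key
  linarith [key]
end

section
variable {n : ℕ} {E : Matrix (Fin n) (Fin n) ℝ}

lemma T_col (hanti : ∀ a b, E b a = - E a b) (hrow : ∀ a, ∑ j, E a j = 0) (a : Fin n) :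
    ∑ i, E i a = 0 := by
  calc ∑ i, E i a = ∑ i, -(E a i) := Finset.sum_congr rfl fun i _ => hanti a i
    _ = -(∑ i, E a i) := by rw [Finset.sum_neg_distrib]
    _ = 0 := by rw [hrow a, neg_zero]

lemma T_valid (hanti : ∀ a b, E b a = - E a b) (hrow : ∀ a, ∑ j, E a j = 0)
    (q : Fin n → Fin n → ℝ) (hq : IsWQMET q) :
    ∑ i, ∑ j, E i j * q i j = 0 := by
  obtain ⟨-, w, -, hw⟩ := hq
  have hcol := T_col hanti hrow
  have key : ∀ i j : Fin n, E i j * q i j + E j i * q j i = E i j * w j - E i j * w i := by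
    intro i j
    have h1 : q i j - q j i = w j - w i := by linarith [hw i j]
    calc E i j * q i j + E j i * q j i = E i j * (q i j - q j i) := by rw [hanti i j]; ring
      _ = E i j * (w j - w i) := by rw [h1]
      _ = E i j * w j - E i j * w i := by ring
  have hswap : ∑ i, ∑ j, E j i * q j i = ∑ i, ∑ j, E i j * q i j := Finset.sum_comm
  have t1 : ∑ i, ∑ j, E i j * w j = 0 := by
    rw [Finset.sum_comm]
    refine Finset.sum_eq_zero fun j _ => ?_
    rw [← Finset.sum_mul, hcol j, zero_mul]
  have t2 : ∑ i, ∑ j, E i j * w i = 0 := by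
    refine Finset.sum_eq_zero fun i _ => ?_
    rw [← Finset.sum_mul, hrow i, zero_mul]
  have big : (∑ i, ∑ j, E i j * q i j) + (∑ i, ∑ j, E i j * q i j) = 0 := by
    nth_rewrite 2 [← hswap]
    rw [← Finset.sum_add_distrib]
    simp only [← Finset.sum_add_distrib]
    calc ∑ i, ∑ j, (E i j * q i j + E j i * q j i)
        = ∑ i, ∑ j, (E i j * w j - E i j * w i) :=
          Finset.sum_congr rfl fun i _ => Finset.sum_congr rfl fun j _ => key i j
      _ = (∑ i, ∑ j, E i j * w j) - (∑ i, ∑ j, E i j * w i) := by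
          simp only [Finset.sum_sub_distrib]
      _ = 0 := by rw [t1, t2, sub_zero]
  linarith [big]
end

lemma sum_pair_ind {n : ℕ} (c : Prop) [Decidable c] (t : Fin n) :
    ∑ b, (if c ∧ b = t then (1:ℝ) else 0) = if c then 1 else 0 := by
  by_cases h : c <;> simp [h]

lemma emat_rowsum {n : ℕ} {i j k : Fin n} (hij : i ≠ j) (hjk : j ≠ k) (hik : i ≠ k)
    (a : Fin n) : ∑ b, Emat i j k a b = 0 := by
  have split1 : ∀ b, (if (a = i ∧ b = j) ∨ (a = j ∧ b = k) ∨ (a = k ∧ b = i) then (1:ℝ) else 0)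
      = (if a = i ∧ b = j then 1 else 0) + (if a = j ∧ b = k then 1 else 0)
        + (if a = k ∧ b = i then 1 else 0) := by
    intro b; split_ifs <;> simp_all
  have split2 : ∀ b, (if (a = j ∧ b = i) ∨ (a = k ∧ b = j) ∨ (a = i ∧ b = k) then (1:ℝ) else 0)
      = (if a = j ∧ b = i then 1 else 0) + (if a = k ∧ b = j then 1 else 0)
        + (if a = i ∧ b = k then 1 else 0) := by
    intro b; split_ifs <;> simp_all
  simp only [Emat, Matrix.of_apply, Finset.sum_sub_distrib, split1, split2,
    Finset.sum_add_distrib, sum_pair_ind]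
  ring

lemma emat_antisym {n : ℕ} (i j k a b : Fin n) : Emat i j k b a = - Emat i j k a b := by
  simp only [Emat, Matrix.of_apply]
  rw [if_congr (show ((b = i ∧ a = j) ∨ (b = j ∧ a = k) ∨ (b = k ∧ a = i)) ↔
      ((a = j ∧ b = i) ∨ (a = k ∧ b = j) ∨ (a = i ∧ b = k)) from by tauto) rfl rfl,
    if_congr (show ((b = j ∧ a = i) ∨ (b = k ∧ a = j) ∨ (b = i ∧ a = k)) ↔
      ((a = i ∧ b = j) ∨ (a = j ∧ b = k) ∨ (a = k ∧ b = i)) from by tauto) rfl rfl]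
  ring

abbrev Pairs (n : ℕ) := {p : Fin n × Fin n // 0 < (p.1 : ℕ) ∧ (p.1 : ℕ) < (p.2 : ℕ)}

noncomputable def Phi {n : ℕ} (z : Fin n) : (Pairs n → ℝ) →ₗ[ℝ] Matrix (Fin n) (Fin n) ℝ where
  toFun c := ∑ p : Pairs n, c p • Emat z p.1.1 p.1.2
  map_add' c d := by simp [add_smul, Finset.sum_add_distrib]
  map_smul' r c := by simp [smul_smul, Finset.smul_sum]

lemma phi_apply {n : ℕ} (z : Fin n) (c : Pairs n → ℝ) (a b : Fin n) :
    (Phi z c) a b = ∑ p : Pairs n, c p * Emat z p.1.1 p.1.2 a b := by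
  simp [Phi, Matrix.sum_apply]

lemma phi_antisym {n : ℕ} (z : Fin n) (c : Pairs n → ℝ) (a b : Fin n) :
    (Phi z c) b a = - (Phi z c) a b := by
  rw [phi_apply, phi_apply, ← Finset.sum_neg_distrib]
  refine Finset.sum_congr rfl fun p _ => ?_
  rw [emat_antisym]; ring

lemma phi_apply_pair {n : ℕ} {z : Fin n} (hz : (z : ℕ) = 0) (c : Pairs n → ℝ) (a b : Fin n)
    (hab : 0 < (a : ℕ) ∧ (a : ℕ) < (b : ℕ)) :
    (Phi z c) a b = c ⟨(a, b), hab⟩ := by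
  have haz : a ≠ z := fun h => by rw [Fin.ext_iff, hz] at h; omega
  have hbz : b ≠ z := fun h => by rw [Fin.ext_iff, hz] at h; omega
  have hab' : a ≠ b := fun h => by rw [Fin.ext_iff] at h; omega
  rw [phi_apply]
  rw [Fintype.sum_eq_single (⟨(a, b), hab⟩ : Pairs n)]
  · simp [Emat, haz, hbz, hab']
  · rintro ⟨⟨i, j⟩, hij⟩ hq
    simp only at hij
    obtain ⟨hi0, hij'⟩ := hij
    have hc1 : ¬((a = z ∧ b = i) ∨ (a = i ∧ b = j) ∨ (a = j ∧ b = z)) := by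
      rintro (⟨h1, -⟩ | ⟨h1, h2⟩ | ⟨-, h2⟩)
      · exact haz h1
      · exact hq (Subtype.ext (Prod.ext h1.symm h2.symm))
      · exact hbz h2
    have hc2 : ¬((a = i ∧ b = z) ∨ (a = j ∧ b = i) ∨ (a = z ∧ b = j)) := by
      rintro (⟨-, h2⟩ | ⟨h1, h2⟩ | ⟨h1, -⟩)
      · exact hbz h2
      · rw [Fin.ext_iff] at h1 h2; omega
      · exact haz h1
    simp only [Emat, Matrix.of_apply]
    rw [if_neg hc1, if_neg hc2]
    ring

lemma pairs_sum_conv {n : ℕ} (g : Fin n × Fin n → ℝ) :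
    ∑ p : Pairs n, g p.val
      = ∑ i : Fin n, ∑ j : Fin n, if 0 < (i : ℕ) ∧ (i : ℕ) < (j : ℕ) then g (i, j) else 0 := by
  rw [← Finset.sum_subtype
      (Finset.univ.filter fun x : Fin n × Fin n => 0 < (x.1 : ℕ) ∧ (x.1 : ℕ) < (x.2 : ℕ))
      (by simp) g]
  rw [Finset.sum_filter, Fintype.sum_prod_type]

lemma emat_z_entry {n : ℕ} {z i j : Fin n} (b : Fin n) (hiz : i ≠ z) (hjz : j ≠ z) :
    Emat z i j z b = (if i = b then (1:ℝ) else 0) - (if j = b then 1 else 0) := by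
  have h1 : z ≠ i := Ne.symm hiz
  have h2 : z ≠ j := Ne.symm hjz
  by_cases hib : i = b <;> by_cases hjb : j = b
  · simp [Emat, h1, h2, hib, hjb, hiz, hjz, Ne.symm hiz, Ne.symm hjz]
  · have hbz : ¬ b = z := fun h => hiz (hib.trans h)
    simp [Emat, h1, h2, hib, hjb, hiz, hjz, Ne.symm hiz, Ne.symm hjz, hbz,
      show ¬ z = b from fun h => hbz h.symm, show ¬ b = j from fun h => hjb h.symm]
  · have hbz : ¬ b = z := fun h => hjz (hjb.trans h)
    simp [Emat, h1, h2, hib, hjb, hiz, hjz, Ne.symm hiz, Ne.symm hjz, hbz,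
      show ¬ z = b from fun h => hbz h.symm, show ¬ b = i from fun h => hib h.symm]
  · simp [Emat, h1, h2, hib, hjb, hiz, hjz, Ne.symm hiz, Ne.symm hjz,
      show ¬ b = i from fun h => hib h.symm, show ¬ b = j from fun h => hjb h.symm]

lemma phi_decomp {n : ℕ} {z : Fin n} (hz : (z : ℕ) = 0) {E : Matrix (Fin n) (Fin n) ℝ}
    (hanti : ∀ a b, E b a = - E a b) (hrow : ∀ a, ∑ j, E a j = 0) :
    Phi z (fun p => E p.val.1 p.val.2) = E := by
  set c : Pairs n → ℝ := fun p => E p.val.1 p.val.2 with hc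
  have hdiag : ∀ a, E a a = 0 := fun a => by have := hanti a a; linarith
  have hne_z : ∀ x : Fin n, x ≠ z ↔ 0 < (x : ℕ) := by
    intro x
    rw [Ne, Fin.ext_iff, hz]
    omega
  have hz_row : ∀ b, b ≠ z → (Phi z c) z b = E z b := by
    intro b hbz
    have hb0 : 0 < (b : ℕ) := (hne_z b).1 hbz
    have step1 : (Phi z c) z b
        = ∑ p : Pairs n, c p * ((if p.val.1 = b then (1:ℝ) else 0)
          - (if p.val.2 = b then 1 else 0)) := by
      rw [phi_apply]
      refine Finset.sum_congr rfl fun p _ => ?_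
      rw [emat_z_entry b ((hne_z _).2 (by exact_mod_cast p.prop.1))
        ((hne_z _).2 (by have := p.prop; omega))]
    have step2 : (Phi z c) z b
        = (∑ i : Fin n, ∑ j : Fin n, if 0 < (i : ℕ) ∧ (i : ℕ) < (j : ℕ)
            then E i j * ((if i = b then (1:ℝ) else 0) - (if j = b then 1 else 0)) else 0) := by
      rw [step1]
      exact pairs_sum_conv (fun x => E x.1 x.2 * ((if x.1 = b then (1:ℝ) else 0)
        - (if x.2 = b then 1 else 0)))
    have split : ∀ i j : Fin n,
        (if 0 < (i : ℕ) ∧ (i : ℕ) < (j : ℕ)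
          then E i j * ((if i = b then (1:ℝ) else 0) - (if j = b then 1 else 0)) else 0)
        = (if i = b then (if 0 < (b : ℕ) ∧ (b : ℕ) < (j : ℕ) then E b j else 0) else 0)
          - (if j = b then (if 0 < (i : ℕ) ∧ (i : ℕ) < (b : ℕ) then E i b else 0) else 0) := by
      intro i j
      by_cases hib : i = b <;> by_cases hjb : j = b
      · have hiv : (i : ℕ) = (b : ℕ) := by rw [hib]
        have hjv : (j : ℕ) = (b : ℕ) := by rw [hjb]
        rw [if_neg (show ¬(0 < (i:ℕ) ∧ (i:ℕ) < (j:ℕ)) by omega), if_pos hib, if_pos hjb,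
          if_neg (show ¬(0 < (b:ℕ) ∧ (b:ℕ) < (j:ℕ)) by omega),
          if_neg (show ¬(0 < (i:ℕ) ∧ (i:ℕ) < (b:ℕ)) by omega)]
        ring
      · have hiv : (i : ℕ) = (b : ℕ) := by rw [hib]
        by_cases hcond : 0 < (i:ℕ) ∧ (i:ℕ) < (j:ℕ)
        · have hcond' : 0 < (b:ℕ) ∧ (b:ℕ) < (j:ℕ) := by omega
          simp only [if_pos hcond, if_pos hib, if_neg hjb, if_pos hcond']
          rw [hib]; ring
        · have hcond' : ¬(0 < (b:ℕ) ∧ (b:ℕ) < (j:ℕ)) := by omega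
          simp only [if_neg hcond, if_pos hib, if_neg hjb, if_neg hcond']
          ring
      · have hjv : (j : ℕ) = (b : ℕ) := by rw [hjb]
        by_cases hcond : 0 < (i:ℕ) ∧ (i:ℕ) < (j:ℕ)
        · have hcond' : 0 < (i:ℕ) ∧ (i:ℕ) < (b:ℕ) := by omega
          simp only [if_pos hcond, if_neg hib, if_pos hjb, if_pos hcond']
          rw [hjb]; ring
        · have hcond' : ¬(0 < (i:ℕ) ∧ (i:ℕ) < (b:ℕ)) := by omega
          simp only [if_neg hcond, if_neg hib, if_pos hjb, if_neg hcond']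
          ring
      · simp only [if_neg hib, if_neg hjb]
        simp
    have part1 : ∑ i : Fin n, ∑ j : Fin n,
        (if i = b then (if 0 < (b : ℕ) ∧ (b : ℕ) < (j : ℕ) then E b j else 0) else 0)
        = ∑ j : Fin n, (if 0 < (b : ℕ) ∧ (b : ℕ) < (j : ℕ) then E b j else 0) := by
      rw [Fintype.sum_eq_single b]
      · simp
      · intro i hi
        simp [hi]
    have part2 : ∑ i : Fin n, ∑ j : Fin n,
        (if j = b then (if 0 < (i : ℕ) ∧ (i : ℕ) < (b : ℕ) then E i b else 0) else 0)
        = ∑ i : Fin n, (if 0 < (i : ℕ) ∧ (i : ℕ) < (b : ℕ) then E i b else 0) := by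
      refine Finset.sum_congr rfl fun i _ => ?_
      rw [Fintype.sum_eq_single b]
      · simp
      · intro j hj
        simp [hj]
    have flip : ∀ i : Fin n, (if 0 < (i : ℕ) ∧ (i : ℕ) < (b : ℕ) then E i b else 0)
        = - (if 0 < (i : ℕ) ∧ (i : ℕ) < (b : ℕ) then E b i else 0) := by
      intro i
      split_ifs with hcond
      · exact hanti b i
      · exact neg_zero.symm
    have combine : ∀ j : Fin n,
        (if 0 < (b : ℕ) ∧ (b : ℕ) < (j : ℕ) then E b j else 0)
          + (if 0 < (j : ℕ) ∧ (j : ℕ) < (b : ℕ) then E b j else 0)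
        = E b j - (if j = z then E b j else 0) - (if j = b then E b j else 0) := by
      intro j
      by_cases hjz : j = z
      · have hj0 : (j : ℕ) = 0 := by rw [hjz, hz]
        rw [if_neg (show ¬(0 < (b:ℕ) ∧ (b:ℕ) < (j:ℕ)) by omega),
          if_neg (show ¬(0 < (j:ℕ) ∧ (j:ℕ) < (b:ℕ)) by omega),
          if_pos hjz, if_neg (show ¬ j = b from fun h => hbz (h.symm.trans hjz))]
        ring
      · by_cases hjb : j = b
        · have hjv : (j : ℕ) = (b : ℕ) := by rw [hjb]
          rw [if_neg (show ¬(0 < (b:ℕ) ∧ (b:ℕ) < (j:ℕ)) by omega),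
            if_neg (show ¬(0 < (j:ℕ) ∧ (j:ℕ) < (b:ℕ)) by omega),
            if_neg hjz, if_pos hjb]
          ring
        · have hj0 : 0 < (j : ℕ) := (hne_z j).1 hjz
          have hjb' : (j : ℕ) ≠ (b : ℕ) := fun h => hjb (Fin.ext h)
          rcases lt_or_gt_of_ne hjb' with h | h
          · rw [if_neg (show ¬(0 < (b:ℕ) ∧ (b:ℕ) < (j:ℕ)) by omega),
              if_pos (⟨hj0, h⟩ : 0 < (j:ℕ) ∧ (j:ℕ) < (b:ℕ)), if_neg hjz, if_neg hjb]
            ring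
          · rw [if_pos (⟨hb0, h⟩ : 0 < (b:ℕ) ∧ (b:ℕ) < (j:ℕ)),
              if_neg (show ¬(0 < (j:ℕ) ∧ (j:ℕ) < (b:ℕ)) by omega), if_neg hjz, if_neg hjb]
            ring
    calc (Phi z c) z b
        = ∑ i : Fin n, ∑ j : Fin n,
            ((if i = b then (if 0 < (b : ℕ) ∧ (b : ℕ) < (j : ℕ) then E b j else 0) else 0)
            - (if j = b then (if 0 < (i : ℕ) ∧ (i : ℕ) < (b : ℕ) then E i b else 0) else 0)) := by
          rw [step2]
          exact Finset.sum_congr rfl fun i _ => Finset.sum_congr rfl fun j _ => split i j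
      _ = (∑ j : Fin n, (if 0 < (b : ℕ) ∧ (b : ℕ) < (j : ℕ) then E b j else 0))
            - ∑ i : Fin n, (if 0 < (i : ℕ) ∧ (i : ℕ) < (b : ℕ) then E i b else 0) := by
          simp only [Finset.sum_sub_distrib]
          rw [part1, part2]
      _ = (∑ j : Fin n, (if 0 < (b : ℕ) ∧ (b : ℕ) < (j : ℕ) then E b j else 0))
            + ∑ j : Fin n, (if 0 < (j : ℕ) ∧ (j : ℕ) < (b : ℕ) then E b j else 0) := by
          simp only [flip, Finset.sum_neg_distrib]
          ring
      _ = ∑ j : Fin n, (E b j - (if j = z then E b j else 0) - (if j = b then E b j else 0)) := by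
          rw [← Finset.sum_add_distrib]
          exact Finset.sum_congr rfl fun j _ => combine j
      _ = (∑ j, E b j) - E b z - E b b := by
          simp only [Finset.sum_sub_distrib, Finset.sum_ite_eq', Finset.mem_univ, if_true]
      _ = E z b := by
          rw [hrow b, hdiag b, hanti z b]
          ring
  ext a b
  by_cases haz : a = z
  · by_cases hbz : b = z
    · rw [haz, hbz]
      have h := phi_antisym z c z z
      have h2 := hdiag z
      linarith
    · rw [haz]
      exact hz_row b hbz
  · by_cases hbz : b = z
    · rw [hbz, show (Phi z c) a z = - (Phi z c) z a from phi_antisym z c z a,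
        hz_row a haz, hanti z a]
    · have ha0 : 0 < (a : ℕ) := (hne_z a).1 haz
      have hb0 : 0 < (b : ℕ) := (hne_z b).1 hbz
      rcases lt_trichotomy ((a : ℕ)) ((b : ℕ)) with h | h | h
      · exact phi_apply_pair hz c a b ⟨ha0, h⟩
      · have hab : a = b := Fin.ext h
        rw [hab]
        have h1 := phi_antisym z c b b
        have h2 := hdiag b
        linarith
      · rw [show (Phi z c) a b = - (Phi z c) b a from phi_antisym z c b a,
          phi_apply_pair hz c b a ⟨hb0, h⟩]
        simp [c, hanti a b]

lemma phi_injective {n : ℕ} {z : Fin n} (hz : (z : ℕ) = 0) :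
    Function.Injective (Phi z (n := n)) := by
  intro c d h
  funext p
  obtain ⟨⟨a, b⟩, hab⟩ := p
  have h1 := phi_apply_pair hz c a b hab
  have h2 := phi_apply_pair hz d a b hab
  rw [← h1, ← h2, h]

lemma sum_range_pred (n : ℕ) : ∑ t ∈ Finset.range n, (t - 1) = (n - 1).choose 2 := by
  induction n with
  | zero => simp
  | succ m ih =>
    rw [Finset.sum_range_succ, ih, Nat.succ_sub_one]
    rcases Nat.eq_zero_or_pos m with rfl | hm
    · simp
    · obtain ⟨k, rfl⟩ := Nat.exists_eq_add_of_le hm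
      have hp : (k + 1).choose 2 = k.choose 1 + k.choose 2 := Nat.choose_succ_succ k 1
      rw [Nat.choose_one_right] at hp
      have h3 : (1 + k - 1) = k := by omega
      rw [h3, add_comm 1 k]
      omega

lemma card_pairs (n : ℕ) : Fintype.card (Pairs n) = (n - 1).choose 2 := by
  rw [Fintype.card_subtype]
  rw [Finset.card_filter]
  rw [Fintype.sum_prod_type]
  rw [Finset.sum_comm]
  have inner : ∀ j : Fin n, ∑ i : Fin n, (if 0 < ((i, j).1 : ℕ) ∧ ((i, j).1 : ℕ) < ((i, j).2 : ℕ) then 1 else 0) = (j : ℕ) - 1 := by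
    intro j
    simp only
    rw [Fin.sum_univ_eq_sum_range (fun v => if 0 < v ∧ v < (j : ℕ) then 1 else 0)]
    rw [← Finset.card_filter]
    have : Finset.filter (fun v => 0 < v ∧ v < (j : ℕ)) (Finset.range n) = Finset.Ico 1 (j : ℕ) := by
      ext v
      simp [Finset.mem_Ico]
      omega
    rw [this, Nat.card_Ico]
  rw [Finset.sum_congr rfl fun j _ => inner j]
  rw [Fin.sum_univ_eq_sum_range (fun v => v - 1)]
  exact sum_range_pred n


def SubT (n : ℕ) : Submodule ℝ (Matrix (Fin n) (Fin n) ℝ) where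
  carrier := {E | (∀ a b, E b a = - E a b) ∧ ∀ a, ∑ j, E a j = 0}
  add_mem' := by
    rintro x y ⟨hx1, hx2⟩ ⟨hy1, hy2⟩
    refine ⟨fun a b => ?_, fun a => ?_⟩
    · simp only [Matrix.add_apply, hx1 a b, hy1 a b]; ring
    · simp only [Matrix.add_apply, Finset.sum_add_distrib, hx2 a, hy2 a, add_zero]
  zero_mem' := ⟨fun a b => by simp, fun a => by simp⟩
  smul_mem' := by
    rintro t x ⟨h1, h2⟩
    refine ⟨fun a b => ?_, fun a => ?_⟩
    · simp only [Matrix.smul_apply, h1 a b, smul_eq_mul]; ring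
    · simp only [Matrix.smul_apply, smul_eq_mul, ← Finset.mul_sum, h2 a, mul_zero]

lemma phi_mem_span {n : ℕ} {z : Fin n} (hz : (z : ℕ) = 0) (c : Pairs n → ℝ) :
    Phi z c ∈ Submodule.span ℝ
      {M : Matrix (Fin n) (Fin n) ℝ |
        ∃ i j k : Fin n, i ≠ j ∧ j ≠ k ∧ i ≠ k ∧ M = Emat i j k} := by
  have hdef : Phi z c = ∑ p : Pairs n, c p • Emat z p.val.1 p.val.2 := rfl
  rw [hdef]
  refine Submodule.sum_mem _ fun p _ => Submodule.smul_mem _ _ (Submodule.subset_span ?_)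
  have hp := p.prop
  refine ⟨z, p.val.1, p.val.2, ?_, ?_, ?_, rfl⟩
  · exact Fin.ne_of_val_ne (by omega)
  · exact Fin.ne_of_val_ne (by omega)
  · exact Fin.ne_of_val_ne (by omega)

/-- the space of linear equalities valid on the cone `WQMET_n`
(zero-diagonal matrices `E` with `Σ E i j q i j = 0` for all `q ∈ WQMET_n`)
is spanned by the matrices `E_{ijk}` for pairwise distinct `i, j, k`, and has
dimension `(n−1 choose 2)`. -/
theorem stmt_17 (n : ℕ) (hn : 1 ≤ n) :
    {E : Matrix (Fin n) (Fin n) ℝ |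
        (∀ i, E i i = 0) ∧
          ∀ q : Fin n → Fin n → ℝ, IsWQMET q → (∑ i, ∑ j, E i j * q i j) = 0}
      = ↑(Submodule.span ℝ
          {M : Matrix (Fin n) (Fin n) ℝ |
            ∃ i j k : Fin n, i ≠ j ∧ j ≠ k ∧ i ≠ k ∧ M = Emat i j k}) ∧
    Module.finrank ℝ
        (Submodule.span ℝ
          {M : Matrix (Fin n) (Fin n) ℝ |
            ∃ i j k : Fin n, i ≠ j ∧ j ≠ k ∧ i ≠ k ∧ M = Emat i j k})
      = (n - 1).choose 2 := by
  have hnpos : 0 < n := hn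
  let z : Fin n := ⟨0, hnpos⟩
  have hz : (z : ℕ) = 0 := rfl
  have hGenT : {M : Matrix (Fin n) (Fin n) ℝ |
      ∃ i j k : Fin n, i ≠ j ∧ j ≠ k ∧ i ≠ k ∧ M = Emat i j k} ⊆ ↑(SubT n) := by
    rintro M ⟨i, j, k, hij, hjk, hik, rfl⟩
    exact ⟨fun a b => emat_antisym i j k a b, fun a => emat_rowsum hij hjk hik a⟩
  constructor
  · ext E
    simp only [Set.mem_setOf_eq, SetLike.mem_coe]
    constructor
    · rintro ⟨hd, hq⟩
      have hrc := constraint_grad hd hq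
      have hsum0 := constraint_cut1 hd hq
      have hrow : ∀ a, ∑ j, E a j = 0 := fun a => by linarith [hrc a, hsum0 a]
      have hcol : ∀ a, ∑ i, E i a = 0 := fun a => by linarith [hrc a, hrow a]
      have hanti : ∀ a b, E b a = - E a b := by
        intro a b
        rcases eq_or_ne a b with rfl | hab
        · rw [hd a, neg_zero]
        · have hc2 := constraint_cut2 hd hq hab
          linarith [hrow a, hcol a, hrow b, hcol b]
      have hmem := phi_mem_span hz (fun p => E p.val.1 p.val.2)
      rwa [phi_decomp hz hanti hrow] at hmem
    · intro hE
      have hET : E ∈ SubT n := (Submodule.span_le.2 hGenT) hE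
      obtain ⟨hanti, hrow⟩ := hET
      refine ⟨fun i => ?_, fun q hq => T_valid hanti hrow q hq⟩
      have := hanti i i
      linarith
  · have hrange : LinearMap.range (Phi z)
        = Submodule.span ℝ {M : Matrix (Fin n) (Fin n) ℝ |
            ∃ i j k : Fin n, i ≠ j ∧ j ≠ k ∧ i ≠ k ∧ M = Emat i j k} := by
      apply le_antisymm
      · rintro M ⟨c, rfl⟩
        exact phi_mem_span hz c
      · intro M hM
        obtain ⟨hanti, hrow⟩ := (Submodule.span_le.2 hGenT) hM
        exact ⟨fun p => M p.val.1 p.val.2, phi_decomp hz hanti hrow⟩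
    rw [← hrange, LinearMap.finrank_range_of_inj (phi_injective hz),
      Module.finrank_fintype_fun_eq_card, card_pairs]
end

section
/- Let n ≥ 1 and let q : Fin n → Fin n → ℝ. Then q lies in the convex cone generated by the oriented cuts δ'(S), S ⊆ Fin n (i.e., q is a finite nonnegative linear combination of oriented cuts) if and only if there exists a function d : Fin (n+1) → Fin (n+1) → ℝ lying in the convex cone generated by the cut semimetrics δ(T), T ⊆ Fin (n+1), such that q i j = (d (i+1) (j+1) − d 0 (i+1) + d 0 (j+1))/2 for all i, j ∈ Fin n. (That is, OCUT_n = Q(CUT_{n+1}).) -/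
/-- Membership in the convex cone generated by a set `G` of functions:
finite nonnegative linear combinations of elements of `G`. -/
def InCone {α : Type*} (G : Set (α → α → ℝ)) (f : α → α → ℝ) : Prop :=
  ∃ (m : ℕ) (c : Fin m → ℝ) (g : Fin m → α → α → ℝ),
    (∀ t, 0 ≤ c t) ∧ (∀ t, g t ∈ G) ∧ f = ∑ t, c t • g t

/-- The oriented cut `δ'(S)`: value 1 on pairs `(i,j)` with `i ∈ S`, `j ∉ S`. -/
def ocut {n : ℕ} (S : Finset (Fin n)) : Fin n → Fin n → ℝ :=
  fun i j => if i ∈ S ∧ j ∉ S then 1 else 0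

/-- The cut semimetric `δ(T)`: value 1 on pairs split by `T`. -/
def cutSM {m : ℕ} (T : Finset (Fin m)) : Fin m → Fin m → ℝ :=
  fun i j => if (i ∈ T ∧ j ∉ T) ∨ (j ∈ T ∧ i ∉ T) then 1 else 0

def Sof {n : ℕ} (T : Finset (Fin (n + 1))) : Finset (Fin n) :=
  if (0 : Fin (n + 1)) ∈ T then Finset.univ.filter (fun k => k.succ ∈ T)
  else Finset.univ.filter (fun k => k.succ ∉ T)

lemma key {n : ℕ} (T : Finset (Fin (n + 1))) (i j : Fin n) :
    ocut (Sof T) i j =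
      (cutSM T i.succ j.succ - cutSM T 0 i.succ + cutSM T 0 j.succ) / 2 := by
  by_cases h0 : (0 : Fin (n + 1)) ∈ T <;> by_cases hi : i.succ ∈ T <;>
    by_cases hj : j.succ ∈ T <;>
      simp [ocut, cutSM, Sof, Finset.mem_filter, h0, hi, hj]

lemma Sof_image {n : ℕ} (S : Finset (Fin n)) :
    Sof (Finset.image Fin.succ Sᶜ) = S := by
  have h0 : (0 : Fin (n + 1)) ∉ Finset.image Fin.succ Sᶜ := by
    simp [Fin.succ_ne_zero]
  ext k
  simp [Sof, h0, Finset.mem_filter, (Fin.succ_injective n).eq_iff]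

/-- `OCUT_n = Q(CUT_{n+1})`: `q` is a nonnegative combination of
oriented cuts iff `q i j = (d (i+1) (j+1) − d 0 (i+1) + d 0 (j+1))/2` for some
`d` in the cut cone on `n+1` points. -/
theorem stmt_18 (n : ℕ) (hn : 1 ≤ n) (q : Fin n → Fin n → ℝ) :
    InCone (Set.range (ocut (n := n))) q ↔
      ∃ d : Fin (n + 1) → Fin (n + 1) → ℝ,
        InCone (Set.range (cutSM (m := n + 1))) d ∧
        ∀ i j : Fin n, q i j = (d i.succ j.succ - d 0 i.succ + d 0 j.succ) / 2 := by
  constructor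
  · rintro ⟨m, c, g, hc, hg, hq⟩
    choose S hS using hg
    set T : Fin m → Finset (Fin (n + 1)) := fun t => Finset.image Fin.succ (S t)ᶜ
    refine ⟨∑ t, c t • cutSM (T t), ⟨m, c, fun t => cutSM (T t), hc,
      fun t => Set.mem_range_self _, rfl⟩, ?_⟩
    intro i j
    have hd : ∀ a b : Fin (n + 1),
        (∑ t, c t • cutSM (T t)) a b = ∑ t, c t * cutSM (T t) a b := by
      intro a b; simp [Finset.sum_apply]
    rw [hq]
    have : (∑ t, c t • g t) i j = ∑ t, c t * ocut (S t) i j := by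
      simp only [← hS]; simp [Finset.sum_apply]
    rw [this, hd, hd, hd]
    rw [← Finset.sum_sub_distrib, ← Finset.sum_add_distrib]
    rw [Finset.sum_div]
    refine Finset.sum_congr rfl fun t _ => ?_
    have hk := key (T t) i j
    rw [Sof_image] at hk
    rw [hk]; ring
  · rintro ⟨d, ⟨m, c, g, hc, hg, hd⟩, hqd⟩
    choose T hT using hg
    refine ⟨m, c, fun t => ocut (Sof (T t)), hc, fun t => Set.mem_range_self _, ?_⟩
    funext i j
    have hda : ∀ a b : Fin (n + 1), d a b = ∑ t, c t * cutSM (T t) a b := by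
      intro a b; rw [hd]; simp only [← hT]; simp [Finset.sum_apply]
    rw [hqd i j, hda, hda, hda]
    rw [← Finset.sum_sub_distrib, ← Finset.sum_add_distrib]
    rw [Finset.sum_div]
    simp only [Finset.sum_apply, Pi.smul_apply, smul_eq_mul]
    refine Finset.sum_congr rfl fun t _ => ?_
    rw [key (T t) i j]; ring
end

section
/- Let n ≥ 1 and let q : Fin n → Fin n → ℝ. Then q lies in the convex cone generated by the oriented cuts δ'(S), S ⊆ Fin n, if and only if there exist m ∈ ℕ and points x : Fin n → (Fin m → ℝ) such that q i j = Σ_{k ∈ Fin m} max (x i k − x j k, 0) for all i, j ∈ Fin n. (That is, OCUT_n is exactly the set of ℓ₁-quasi-semimetrics on n points, the quasi-semimetrics embeddable into the oriented ℓ₁-norm ‖x − y‖_{1,or} = Σ_k max(x_k − y_k, 0).) -/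
open scoped NNReal


/-- `InCone` is the same as membership in the `ℝ≥0`-span. -/
lemma inCone_iff_mem_span {α : Type*} (G : Set (α → α → ℝ)) (f : α → α → ℝ) :
    InCone G f ↔ f ∈ Submodule.span ℝ≥0 G := by
  constructor
  · rintro ⟨m, c, g, hc, hg, rfl⟩
    refine Submodule.sum_mem _ fun t _ => ?_
    have : c t • g t = (⟨c t, hc t⟩ : ℝ≥0) • g t :=
      (NNReal.smul_def (⟨c t, hc t⟩ : ℝ≥0) (g t)).symm
    rw [this]
    exact Submodule.smul_mem _ _ (Submodule.subset_span (hg t))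
  · intro h
    obtain ⟨c, hsupp, hsum⟩ := Submodule.mem_span_set.mp h
    refine ⟨c.support.card, fun t => (c (c.support.equivFin.symm t) : ℝ),
      fun t => (c.support.equivFin.symm t : α → α → ℝ), fun t => (c _).coe_nonneg,
      fun t => hsupp (c.support.equivFin.symm t).2, ?_⟩
    rw [← hsum, Finsupp.sum, ← Finset.sum_attach c.support (fun a => c a • a),
      ← Finset.univ_eq_attach,
      ← Equiv.sum_comp c.support.equivFin.symm
        (fun a : {x // x ∈ c.support} => c ↑a • (↑a : α → α → ℝ))]
    exact Finset.sum_congr rfl fun t _ => NNReal.smul_def _ _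

lemma smul_ocut_mem {n : ℕ} (S : Finset (Fin n)) (ε : ℝ) (hε : 0 ≤ ε) :
    (fun i j => ε * ocut S i j) ∈ Submodule.span ℝ≥0 (Set.range (ocut (n := n))) := by
  have h : (fun i j => ε * ocut S i j) = (⟨ε, hε⟩ : ℝ≥0) • ocut S := by
    funext i j
    simp [NNReal.smul_def]
  rw [h]
  exact Submodule.smul_mem _ _ (Submodule.subset_span ⟨S, rfl⟩)

lemma key_aux {n : ℕ} (hn : 1 ≤ n) (N : ℕ) :
    ∀ (v : Fin n → ℝ),
      (Finset.univ.filter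
        (fun i => v i ≠ Finset.univ.inf' ⟨⟨0, hn⟩, Finset.mem_univ _⟩ v)).card ≤ N →
      (fun i j => max (v i - v j) 0) ∈ Submodule.span ℝ≥0 (Set.range (ocut (n := n))) := by
  have hne : (Finset.univ : Finset (Fin n)).Nonempty := ⟨⟨0, hn⟩, Finset.mem_univ _⟩
  induction N with
  | zero =>
    intro v hv
    set M := Finset.univ.inf' hne v with hM
    have hS : (Finset.univ.filter (fun i => v i ≠ M)) = ∅ := by
      rwa [← Finset.card_eq_zero, ← Nat.le_zero]
    have hconst : ∀ i, v i = M := by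
      intro i
      by_contra h
      have : i ∈ Finset.univ.filter (fun i => v i ≠ M) := by simp [h]
      simp [hS] at this
    have : (fun i j => max (v i - v j) 0) = (0 : Fin n → Fin n → ℝ) := by
      funext i j
      simp [hconst i, hconst j]
    rw [this]
    exact Submodule.zero_mem _
  | succ N ih =>
    intro v hv
    set M := Finset.univ.inf' hne v with hM
    have hMle : ∀ i, M ≤ v i := fun i => Finset.inf'_le _ (Finset.mem_univ i)
    set S := Finset.univ.filter (fun i => v i ≠ M) with hSdef
    rcases S.eq_empty_or_nonempty with hS | hS
    · have hconst : ∀ i, v i = M := by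
        intro i
        by_contra h
        have : i ∈ S := by simp [hSdef, h]
        simp [hS] at this
      have : (fun i j => max (v i - v j) 0) = (0 : Fin n → Fin n → ℝ) := by
        funext i j
        simp [hconst i, hconst j]
      rw [this]
      exact Submodule.zero_mem _
    · -- nontrivial case
      set ε := S.inf' hS v - M with hεdef
      have hvS : ∀ i ∈ S, M < v i := by
        intro i hi
        rcases lt_or_eq_of_le (hMle i) with h | h
        · exact h
        · exact absurd h.symm (by simpa [hSdef] using hi)
      have hε : 0 < ε := by
        obtain ⟨i₀, hi₀, hinf⟩ := Finset.exists_mem_eq_inf' hS v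
        have h1 := hvS i₀ hi₀
        have h2 : ε = S.inf' hS v - M := rfl
        have h3 : S.inf' hS v = v i₀ := hinf
        linarith
      have hεle : ∀ i ∈ S, M + ε ≤ v i := by
        intro i hi
        have h1 : S.inf' hS v ≤ v i := Finset.inf'_le _ hi
        have h2 : ε = S.inf' hS v - M := rfl
        linarith
      have hnotS : ∀ i, i ∉ S → v i = M := by
        intro i hi
        by_contra h
        exact hi (by simp [hSdef, h])
      set v' := fun i => if i ∈ S then v i - ε else v i with hv'def
      -- claim: min of v' is M and new S set is strictly smaller
      have hv'ge : ∀ i, M ≤ v' i := by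
        intro i
        by_cases hi : i ∈ S
        · have := hεle i hi; simp [hv'def, hi]; linarith
        · simp [hv'def, hi, hnotS i hi]
      obtain ⟨i₀, hi₀, hinf⟩ := Finset.exists_mem_eq_inf' hS v
      have hv'i₀ : v' i₀ = M := by simp [hv'def, hi₀, ← hinf, hεdef]
      have hM' : Finset.univ.inf' hne v' = M := by
        apply le_antisymm
        · rw [← hv'i₀]; exact Finset.inf'_le _ (Finset.mem_univ i₀)
        · exact Finset.le_inf' _ _ fun i _ => hv'ge i
      have hsub : (Finset.univ.filter (fun i => v' i ≠ M)) ⊂ S := by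
        constructor
        · intro i hi
          simp only [Finset.mem_filter, Finset.mem_univ, true_and] at hi
          by_contra h
          exact hi (by simp [hv'def, h, hnotS i h])
        · intro h
          have := h hi₀
          simp [hv'i₀] at this
      have hcard : (Finset.univ.filter (fun i => v' i ≠ M)).card ≤ N := by
        have := Finset.card_lt_card hsub
        omega
      have hmem' : (fun i j => max (v' i - v' j) 0) ∈
          Submodule.span ℝ≥0 (Set.range (ocut (n := n))) := by
        apply ih v'
        rwa [hM']
      -- decomposition
      have hdecomp : (fun i j => max (v i - v j) 0) =
          (fun i j => ε * ocut S i j) + (fun i j => max (v' i - v' j) 0) := by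
        funext i j
        simp only [Pi.add_apply]
        by_cases hi : i ∈ S <;> by_cases hj : j ∈ S
        · simp [ocut, hv'def, hi, hj]
        · have h1 : v j = M := hnotS j hj
          have h2 : M + ε ≤ v i := hεle i hi
          have e1 : ocut S i j = 1 := by simp [ocut, hi, hj]
          have e2 : v' i = v i - ε := by simp [hv'def, hi]
          have e3 : v' j = v j := by simp [hv'def, hj]
          rw [e1, e2, e3, max_eq_left (by linarith), max_eq_left (by linarith)]
          ring
        · have h1 : v i = M := hnotS i hi
          have h2 : M + ε ≤ v j := hεle j hj
          have e1 : ocut S i j = 0 := by simp [ocut, hi]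
          have e2 : v' i = v i := by simp [hv'def, hi]
          have e3 : v' j = v j - ε := by simp [hv'def, hj]
          rw [e1, e2, e3, max_eq_right (by linarith), max_eq_right (by linarith)]
          ring
        · have h1 : v i = M := hnotS i hi
          have h2 : v j = M := hnotS j hj
          simp [ocut, hv'def, hi, hj, h1, h2]
      rw [hdecomp]
      exact Submodule.add_mem _ (smul_ocut_mem S ε hε.le) hmem'

/-- `OCUT_n` is exactly the set of `ℓ₁`-quasi-semimetrics:
`q` is a nonnegative combination of oriented cuts iff it embeds into the
oriented `ℓ₁`-norm `‖x − y‖_{1,or} = Σ_k max(x_k − y_k, 0)`. -/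
theorem stmt_19 (n : ℕ) (hn : 1 ≤ n) (q : Fin n → Fin n → ℝ) :
    InCone (Set.range (ocut (n := n))) q ↔
      ∃ (m : ℕ) (x : Fin n → Fin m → ℝ),
        ∀ i j, q i j = ∑ k, max (x i k - x j k) 0 := by
  constructor
  · rintro ⟨m, c, g, hc, hg, rfl⟩
    choose S hS using hg
    refine ⟨m, fun i t => c t * (if i ∈ S t then 1 else 0), fun i j => ?_⟩
    rw [Finset.sum_apply, Finset.sum_apply]
    apply Finset.sum_congr rfl
    intro t _
    simp only [Pi.smul_apply, smul_eq_mul, ← hS t, ocut]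
    by_cases hi : i ∈ S t <;> by_cases hj : j ∈ S t
    · simp [hi, hj]
    · rw [if_pos (⟨hi, hj⟩ : i ∈ S t ∧ j ∉ S t), if_pos hi, if_neg hj, mul_one, mul_zero,
        sub_zero, max_eq_left (hc t)]
    · rw [if_neg (by tauto : ¬(i ∈ S t ∧ j ∉ S t)), if_neg hi, if_pos hj, mul_zero, mul_one,
        zero_sub, max_eq_right (by linarith [hc t] : -(c t) ≤ 0)]
    · simp [hi, hj]
  · rintro ⟨m, x, hx⟩
    rw [inCone_iff_mem_span]
    have hq : q = ∑ k : Fin m, (fun i j => max (x i k - x j k) 0) := by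
      funext i j
      rw [hx i j]
      simp [Finset.sum_apply]
    rw [hq]
    refine Submodule.sum_mem _ fun k _ => ?_
    exact key_aux hn _ (fun i => x i k) le_rfl
end
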